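/- arXiv:1901.02331 — 8 statements merged into one kernel-verified Lean document; each statement's English description precedes it below -/
import Mathlib

section
/- For β of modulus 1 and λ in the punctured unit disk 𝔻 \ {0}, the anti-linear map J_{β,λ} on H² defined by (J_{β,λ}f)(z) = β·√(1−|λ|²)/(1−z·conj(λ)) · conj(f( (λ/conj(λ)) · (conj(λ)−conj(z))/(1−λ·conj(z)) )) is a conjugation on H²: anti-linear, isometric and involutive. -/
open Complex ComplexConjugate Metric Filter

noncomputable section

/-- The Hardy space `H²`, modeled as the space of square-summable Taylor coefficient
sequences, i.e. `ℓ²(ℕ, ℂ)`, with inner product `⟨f,g⟩ = Σₙ aₙ conj(bₙ)`. -/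
abbrev H2 := lp (fun _ : ℕ => ℂ) 2

/-- The holomorphic function on the unit disk associated to an element of `H²`. -/
def H2.toFun (f : H2) (z : ℂ) : ℂ := ∑' n, f n * z ^ n

/-- The open unit disk. -/
def 𝔻 : Set ℂ := Metric.ball (0 : ℂ) 1

namespace Stmt1Aux

open scoped InnerProductSpace ENNReal

lemma mem_D_iff {z : ℂ} : z ∈ 𝔻 ↔ ‖z‖ < 1 := by
  simp [𝔻, Metric.mem_ball, dist_eq_norm]

lemma kern_mem (w : ℂ) (hw : ‖w‖ < 1) : Memℓp (fun n : ℕ => (conj w) ^ n) 2 := by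
  apply memℓp_gen
  have h : Summable (fun n : ℕ => (‖w‖ ^ 2) ^ n) := by
    apply summable_geometric_of_lt_one (by positivity)
    calc ‖w‖^2 ≤ ‖w‖ * 1 := by nlinarith [norm_nonneg w]
    _ < 1 := by simpa using hw
  apply h.congr
  intro n
  have h2 : (2:ℝ≥0∞).toReal = ((2:ℕ):ℝ) := by norm_num
  rw [h2, Real.rpow_natCast]
  rw [norm_pow, RCLike.norm_conj, ← pow_mul, ← pow_mul, mul_comm]

/-- The reproducing kernel at `w`. -/
def kern (w : ℂ) (hw : ‖w‖ < 1) : H2 := ⟨fun n : ℕ => (conj w) ^ n, kern_mem w hw⟩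

lemma kern_apply (w : ℂ) (hw : ‖w‖ < 1) (n : ℕ) :
    (kern w hw : ∀ _ : ℕ, ℂ) n = (conj w) ^ n := rfl

lemma inner_kern (w : ℂ) (hw : ‖w‖ < 1) (f : H2) : ⟪kern w hw, f⟫_ℂ = H2.toFun f w := by
  rw [lp.inner_eq_tsum]
  apply tsum_congr
  intro n
  simp [kern_apply, RCLike.inner_apply, H2.toFun, mul_comm]

lemma summable_toFun (f : H2) {z : ℂ} (hz : ‖z‖ < 1) : Summable (fun n : ℕ => f n * z ^ n) := by
  apply Summable.of_norm_bounded
    ((summable_geometric_of_lt_one (norm_nonneg z) hz).mul_left ‖f‖)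
  intro n
  rw [norm_mul, norm_pow]
  gcongr
  exact lp.norm_apply_le_norm (by norm_num) f n

def fms (f : H2) : FormalMultilinearSeries ℂ ℂ ℂ :=
  fun n => ContinuousMultilinearMap.mkPiRing ℂ (Fin n) (f n)

lemma fms_apply (f : H2) (n : ℕ) (y : ℂ) : (fms f n) (fun _ => y) = f n * y ^ n := by
  simp [fms, ContinuousMultilinearMap.mkPiRing_apply, smul_eq_mul, mul_comm]

lemma hasFPSOB (f : H2) : HasFPowerSeriesOnBall (H2.toFun f) (fms f) 0 1 := by
  constructor
  · apply ENNReal.le_of_forall_nnreal_lt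
    intro r hr
    apply FormalMultilinearSeries.le_radius_of_bound _ ‖f‖
    intro n
    have h1 : ‖fms f n‖ = ‖f n‖ := by
      simp [fms, ContinuousMultilinearMap.norm_mkPiRing]
    rw [h1]
    have h2 : ‖f n‖ ≤ ‖f‖ := lp.norm_apply_le_norm (by norm_num) f n
    have h3 : (r:ℝ) ^ n ≤ 1 := by
      apply pow_le_one₀ r.coe_nonneg
      exact_mod_cast (le_of_lt (by exact_mod_cast hr : (r:ℝ≥0∞) < 1) : (r:ℝ≥0∞) ≤ 1) |>.trans (le_refl _) |>.trans_eq rfl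
    nlinarith [norm_nonneg (f n), norm_nonneg f, pow_nonneg r.coe_nonneg n]
  · norm_num
  · intro y hy
    rw [EMetric.mem_ball, edist_zero_right] at hy
    have hy' : ‖y‖ < 1 := by
      have := hy
      simp only [← ENNReal.coe_one, ENNReal.coe_lt_coe] at this
      exact_mod_cast this
    have hs := summable_toFun f hy'
    have heq : (fun n : ℕ => (fms f n) fun _ => y) = fun n => f n * y ^ n :=
      funext fun n => fms_apply f n y
    rw [heq, zero_add]
    exact hs.hasSum

lemma toFun_injective {f g : H2} (h : ∀ z ∈ 𝔻, H2.toFun f z = H2.toFun g z) :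
    f = g := by
  have h1 : HasFPowerSeriesAt (H2.toFun f) (fms f) 0 := (hasFPSOB f).hasFPowerSeriesAt
  have h2 : HasFPowerSeriesAt (H2.toFun f) (fms g) 0 := by
    apply ((hasFPSOB g).hasFPowerSeriesAt).congr
    filter_upwards [Metric.ball_mem_nhds (0:ℂ) one_pos] with z hz
    exact (h z hz).symm
  have heq := h1.eq_formalMultilinearSeries h2
  apply lp.ext
  funext n
  have h4 : f n * 1 ^ n = g n * 1 ^ n := by
    rw [← fms_apply, ← fms_apply, heq]
  simpa using h4

lemma one_sub_ne {a b : ℂ} (ha : ‖a‖ < 1) (hb : ‖b‖ < 1) : 1 - a * b ≠ 0 := by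
  intro h
  have h1 : (1:ℂ) = a * b := sub_eq_zero.mp h
  have h2 := congrArg norm h1
  rw [norm_one, norm_mul] at h2
  nlinarith [norm_nonneg a, norm_nonneg b]

lemma normSq_key (l z : ℂ) :
    (normSq (1 - l * conj z) : ℝ) - normSq (conj l - conj z)
      = (1 - normSq l) * (1 - normSq z) := by
  have c : ((normSq (1 - l * conj z) : ℝ) : ℂ) - ((normSq (conj l - conj z) : ℝ) : ℂ)
      = (((1 - normSq l) * (1 - normSq z) : ℝ) : ℂ) := by
    push_cast
    simp only [← Complex.mul_conj]
    simp only [map_sub, map_mul, map_one, Complex.conj_conj]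
    ring
  exact_mod_cast c

lemma norm_num_lt_denom {l z : ℂ} (hl : ‖l‖ < 1) (hz : ‖z‖ < 1) :
    ‖conj l - conj z‖ < ‖1 - l * conj z‖ := by
  have key := normSq_key l z
  have e1 : normSq (1 - l * conj z) = ‖1 - l * conj z‖ ^ 2 := by
    rw [Complex.normSq_eq_norm_sq]
  have e2 : normSq (conj l - conj z) = ‖conj l - conj z‖ ^ 2 := by
    rw [Complex.normSq_eq_norm_sq]
  have e3 : normSq l = ‖l‖ ^ 2 := by rw [Complex.normSq_eq_norm_sq]
  have e4 : normSq z = ‖z‖ ^ 2 := by rw [Complex.normSq_eq_norm_sq]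
  rw [e1, e2, e3, e4] at key
  have hl2 : ‖l‖ ^ 2 < 1 := by nlinarith [norm_nonneg l]
  have hz2 : ‖z‖ ^ 2 < 1 := by nlinarith [norm_nonneg z]
  have hpos : 0 < (1 - ‖l‖ ^ 2) * (1 - ‖z‖ ^ 2) := mul_pos (by linarith) (by linarith)
  have h5 : ‖conj l - conj z‖ ^ 2 < ‖1 - l * conj z‖ ^ 2 := by linarith
  exact lt_of_pow_lt_pow_left₀ 2 (norm_nonneg _) h5

/-- The (conjugated) Möbius-type map appearing in the definition of `J`. -/
def phi (l z : ℂ) : ℂ := (l / conj l) * ((conj l - conj z) / (1 - l * conj z))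

lemma conj_phi (l z : ℂ) : conj (phi l z) = (conj l / l) * ((l - z) / (1 - conj l * z)) := by
  simp [phi, map_mul, map_div₀, map_sub, Complex.conj_conj]

section
variable {β l v w z : ℂ}

lemma aux_ne (hl : ‖l‖ < 1) (hz : ‖z‖ < 1) : 1 - l * conj z ≠ 0 :=
  one_sub_ne hl (by simpa using hz)

lemma aux_ne' (hl : ‖l‖ < 1) (hz : ‖z‖ < 1) : 1 - conj l * z ≠ 0 :=
  one_sub_ne (by simpa using hl) hz

lemma phi_mem (hl : ‖l‖ < 1) (hl0 : l ≠ 0) (hz : ‖z‖ < 1) : ‖phi l z‖ < 1 := by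
  unfold phi
  have h1 : ‖(l : ℂ) / conj l‖ = 1 := by
    rw [norm_div, RCLike.norm_conj, div_self]
    simpa using hl0
  rw [norm_mul, h1, one_mul, norm_div]
  have h2 := norm_num_lt_denom hl hz
  have h3 : 0 < ‖1 - l * conj z‖ := lt_of_le_of_lt (norm_nonneg _) h2
  rw [div_lt_one h3]
  exact h2

lemma norm_conj_phi_lt (hl : ‖l‖ < 1) (hl0 : l ≠ 0) (hz : ‖z‖ < 1) : ‖conj (phi l z)‖ < 1 := by
  rw [RCLike.norm_conj]; exact phi_mem hl hl0 hz

lemma phi_invol (hl : ‖l‖ < 1) (hl0 : l ≠ 0) (hz : ‖z‖ < 1) : phi l (phi l z) = z := by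
  have hcl : conj l ≠ 0 := by simpa using hl0
  have d1 : 1 - l * conj z ≠ 0 := aux_ne hl hz
  have d2 : 1 - conj l * z ≠ 0 := aux_ne' hl hz
  have hs : 1 - l * conj l ≠ 0 := one_sub_ne hl (by simpa using hl)
  rw [show phi l (phi l z)
    = (l / conj l) * ((conj l - conj (phi l z)) / (1 - l * conj (phi l z))) from rfl, conj_phi]
  field_simp
  have hden : conj l * (l * (1 - conj l * z) - l * (conj l * (l - z))) ≠ 0 := by
    rw [show conj l * (l * (1 - conj l * z) - l * (conj l * (l - z)))
      = (conj l * l) * (1 - l * conj l) from by ring]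
    exact mul_ne_zero (mul_ne_zero hcl hl0) hs
  rw [div_eq_iff (by rw [show (1:ℂ) - conj l * z - conj l * (l - z) = 1 - l * conj l from by ring]; exact hs)]
  ring

lemma kern_identity (hβ : ‖β‖ = 1) (hl : ‖l‖ < 1) (hl0 : l ≠ 0) (hz : ‖z‖ < 1) :
    β * ((Real.sqrt (1 - ‖l‖ ^ 2) : ℂ) / (1 - z * conj l)) *
      conj (β * ((Real.sqrt (1 - ‖l‖ ^ 2) : ℂ) / (1 - phi l z * conj l))) = 1 := by
  have hcl : conj l ≠ 0 := by simpa using hl0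
  have hββ : β * conj β = 1 := by
    rw [Complex.mul_conj]
    norm_cast
    simp [Complex.normSq_eq_norm_sq, hβ]
  have hsq : ((Real.sqrt (1 - ‖l‖ ^ 2) : ℝ) : ℂ) * ((Real.sqrt (1 - ‖l‖ ^ 2) : ℝ) : ℂ)
      = 1 - l * conj l := by
    rw [← Complex.ofReal_mul, Real.mul_self_sqrt (by nlinarith [norm_nonneg l, hl])]
    rw [Complex.mul_conj, Complex.normSq_eq_norm_sq]
    push_cast
    ring
  have hs : 1 - l * conj l ≠ 0 := one_sub_ne hl (by simpa using hl)
  have d1 : 1 - z * conj l ≠ 0 := one_sub_ne hz (by simpa using hl)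
  have d2 : 1 - conj l * z ≠ 0 := aux_ne' hl hz
  have hden : (1 - z * conj l) * (1 - conj (phi l z) * l) = 1 - l * conj l := by
    rw [conj_phi]
    field_simp
    ring
  have e1 : conj (β * ((Real.sqrt (1 - ‖l‖ ^ 2) : ℂ) / (1 - phi l z * conj l)))
      = conj β * ((Real.sqrt (1 - ‖l‖ ^ 2) : ℂ) / (1 - conj (phi l z) * l)) := by
    simp only [map_mul, map_div₀, map_sub, map_one, Complex.conj_conj, Complex.conj_ofReal]
  rw [e1]
  calc β * ((Real.sqrt (1 - ‖l‖ ^ 2) : ℂ) / (1 - z * conj l)) *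
        (conj β * ((Real.sqrt (1 - ‖l‖ ^ 2) : ℂ) / (1 - conj (phi l z) * l)))
      = (β * conj β) * (((Real.sqrt (1 - ‖l‖ ^ 2) : ℂ) / (1 - z * conj l)) *
          ((Real.sqrt (1 - ‖l‖ ^ 2) : ℂ) / (1 - conj (phi l z) * l))) := by ring
    _ = (β * conj β) * (((Real.sqrt (1 - ‖l‖ ^ 2) : ℂ) * (Real.sqrt (1 - ‖l‖ ^ 2) : ℂ)) /
          ((1 - z * conj l) * (1 - conj (phi l z) * l))) := by rw [div_mul_div_comm]
    _ = 1 := by rw [hββ, hden, hsq, one_mul, div_self hs]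

lemma sym_key (hl : ‖l‖ < 1) (hl0 : l ≠ 0) (hv : ‖v‖ < 1) (hw : ‖w‖ < 1) :
    β * ((Real.sqrt (1 - ‖l‖ ^ 2) : ℂ) / (1 - v * conj l)) * conj ((1 - phi l v * conj w)⁻¹)
      = β * (Real.sqrt (1 - ‖l‖ ^ 2) : ℂ) * l /
        (l - l * conj l * (v + w) + conj l * v * w) := by
  have hcl : conj l ≠ 0 := by simpa using hl0
  have d1 : 1 - v * conj l ≠ 0 := one_sub_ne hv (by simpa using hl)
  have d2 : 1 - conj l * v ≠ 0 := aux_ne' hl hv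
  have hne : 1 - conj (phi l v) * w ≠ 0 := one_sub_ne (norm_conj_phi_lt hl hl0 hv) hw
  have hD : l - l * conj l * (v + w) + conj l * v * w ≠ 0 := by
    have e : l - l * conj l * (v + w) + conj l * v * w
        = l * (1 - conj l * v) * (1 - conj (phi l v) * w) := by
      rw [conj_phi]
      field_simp
      ring
    rw [e]
    exact mul_ne_zero (mul_ne_zero hl0 d2) hne
  have e2 : 1 - conj (phi l v) * w
      = (l - l * conj l * (v + w) + conj l * v * w) / (l * (1 - conj l * v)) := by
    rw [conj_phi, eq_div_iff (mul_ne_zero hl0 d2)]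
    field_simp
    ring
  rw [map_inv₀, map_sub, map_one, map_mul, Complex.conj_conj, e2, inv_div]
  rw [show (1 : ℂ) - v * conj l = 1 - conj l * v from by ring]
  field_simp

lemma sym_identity (hl : ‖l‖ < 1) (hl0 : l ≠ 0) (hv : ‖v‖ < 1) (hw : ‖w‖ < 1) :
    β * ((Real.sqrt (1 - ‖l‖ ^ 2) : ℂ) / (1 - v * conj l)) * conj ((1 - phi l v * conj w)⁻¹)
      = β * ((Real.sqrt (1 - ‖l‖ ^ 2) : ℂ) / (1 - w * conj l)) * conj ((1 - phi l w * conj v)⁻¹) := by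
  rw [sym_key hl hl0 hv hw, sym_key hl hl0 hw hv]
  ring_nf

end

end Stmt1Aux
open Stmt1Aux in
open scoped InnerProductSpace Topology in
/-- for unimodular `β` and `λ ∈ 𝔻 \ {0}`, the map
`J_{β,λ}f(z) = β·√(1−|λ|²)/(1−z·conj λ) · conj(f((λ/conj λ)·(conj λ − conj z)/(1 − λ·conj z)))`
is a conjugation on `H²`: anti-linear, isometric and involutive. -/
theorem stmt1 (β l : ℂ) (hβ : ‖β‖ = 1) (hl : l ∈ 𝔻) (hl0 : l ≠ 0) (J : H2 → H2)
    (hJ : ∀ f : H2, ∀ z ∈ 𝔻, H2.toFun (J f) z =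
      β * ((Real.sqrt (1 - ‖l‖ ^ 2) : ℂ) / (1 - z * conj l)) *
        conj (H2.toFun f ((l / conj l) * ((conj l - conj z) / (1 - l * conj z))))) :
    (∀ f g : H2, J (f + g) = J f + J g) ∧
    (∀ (c : ℂ) (f : H2), J (c • f) = conj c • J f) ∧
    (∀ f : H2, ‖J f‖ = ‖f‖) ∧
    (∀ f : H2, J (J f) = f) := by
  have hl' : ‖l‖ < 1 := mem_D_iff.mp hl
  -- reformulated hypothesis
  have hJ' : ∀ (f : H2) (z : ℂ), ‖z‖ < 1 → H2.toFun (J f) z =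
      β * ((Real.sqrt (1 - ‖l‖ ^ 2) : ℂ) / (1 - z * conj l)) *
        conj (H2.toFun f (phi l z)) := fun f z hz => hJ f z (mem_D_iff.mpr hz)
  -- basic toFun lemmas
  have tF_add : ∀ (f g : H2) (z : ℂ), ‖z‖ < 1 →
      H2.toFun (f + g) z = H2.toFun f z + H2.toFun g z := by
    intro f g z hz
    rw [← inner_kern z hz, ← inner_kern z hz, ← inner_kern z hz, inner_add_right]
  have tF_smul : ∀ (c : ℂ) (f : H2) (z : ℂ), ‖z‖ < 1 →
      H2.toFun (c • f) z = c * H2.toFun f z := by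
    intro c f z hz
    rw [← inner_kern z hz, ← inner_kern z hz, inner_smul_right]
  have tF_zero : ∀ z : ℂ, H2.toFun (0 : H2) z = 0 := by
    intro z
    simp [H2.toFun]
  have tF_cont : ∀ (z : ℂ), ‖z‖ < 1 → Continuous fun f : H2 => H2.toFun f z := by
    intro z hz
    have e : (fun f : H2 => H2.toFun f z) = fun f : H2 => ⟪kern z hz, f⟫_ℂ :=
      funext fun f => (inner_kern z hz f).symm
    rw [e]
    exact continuous_const.inner continuous_id
  -- additivity
  have hJadd : ∀ f g : H2, J (f + g) = J f + J g := by
    intro f g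
    apply toFun_injective
    intro z hzD
    have hz := mem_D_iff.mp hzD
    have hφ := phi_mem hl' hl0 hz
    rw [tF_add (J f) (J g) z hz, hJ' (f + g) z hz, hJ' f z hz, hJ' g z hz,
      tF_add f g (phi l z) hφ, map_add]
    ring
  -- conjugate-homogeneity
  have hJsmul : ∀ (c : ℂ) (f : H2), J (c • f) = conj c • J f := by
    intro c f
    apply toFun_injective
    intro z hzD
    have hz := mem_D_iff.mp hzD
    have hφ := phi_mem hl' hl0 hz
    rw [tF_smul (conj c) (J f) z hz, hJ' (c • f) z hz, hJ' f z hz,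
      tF_smul c f (phi l z) hφ, map_mul]
    ring
  have hJzero : J 0 = 0 := by
    have h := hJsmul 0 0
    rw [zero_smul, map_zero, zero_smul] at h
    exact h
  -- involutivity
  have hJinv : ∀ f : H2, J (J f) = f := by
    intro f
    apply toFun_injective
    intro z hzD
    have hz := mem_D_iff.mp hzD
    have hφz := phi_mem hl' hl0 hz
    have hki := kern_identity hβ hl' hl0 hz
    rw [hJ' (J f) z hz, hJ' f (phi l z) hφz, phi_invol hl' hl0 hz]
    simp only [map_mul, Complex.conj_conj] at hki ⊢
    linear_combination (H2.toFun f z) * hki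
  refine ⟨hJadd, hJsmul, ?_, hJinv⟩
  -- continuity of J, via the closed graph theorem
  have hJr : ∀ (r : ℝ) (f : H2), J (r • f) = r • J f := by
    intro r f
    have h1 : r • f = ((r : ℂ)) • f := by
      rw [← smul_one_smul ℂ r f, Complex.real_smul, mul_one]
    have h2 : r • J f = ((r : ℂ)) • J f := by
      rw [← smul_one_smul ℂ r (J f), Complex.real_smul, mul_one]
    rw [h1, h2, hJsmul, Complex.conj_ofReal]
  let Jlin : H2 →ₗ[ℝ] H2 :=
    { toFun := J
      map_add' := hJadd
      map_smul' := fun r f => by simp only [RingHom.id_apply]; exact hJr r f }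
  have hJcont : Continuous J := by
    have : Continuous Jlin := by
      apply Jlin.continuous_of_seq_closed_graph
      intro u x y hux huy
      show y = J x
      apply toFun_injective
      intro z hzD
      have hz := mem_D_iff.mp hzD
      have hφz := phi_mem hl' hl0 hz
      have e1 : Tendsto (fun n => H2.toFun (J (u n)) z) atTop (𝓝 (H2.toFun y z)) :=
        ((tF_cont z hz).tendsto y).comp huy
      have e3 : Tendsto (fun n => H2.toFun (u n) (phi l z)) atTop
          (𝓝 (H2.toFun x (phi l z))) := ((tF_cont _ hφz).tendsto x).comp hux
      have e4 : Tendsto (fun n => β * ((Real.sqrt (1 - ‖l‖ ^ 2) : ℂ) / (1 - z * conj l)) *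
          conj (H2.toFun (u n) (phi l z))) atTop
          (𝓝 (β * ((Real.sqrt (1 - ‖l‖ ^ 2) : ℂ) / (1 - z * conj l)) *
            conj (H2.toFun x (phi l z)))) := by
        exact tendsto_const_nhds.mul ((Complex.continuous_conj.tendsto _).comp e3)
      have e2 : Tendsto (fun n => H2.toFun (J (u n)) z) atTop (𝓝 (H2.toFun (J x) z)) := by
        rw [hJ' x z hz]
        exact e4.congr (fun n => (hJ' (u n) z hz).symm)
      exact tendsto_nhds_unique e1 e2
    exact this
  -- span of the kernels is dense
  set SK : Set H2 := {g : H2 | ∃ w : ℂ, ∃ hw : ‖w‖ < 1, g = kern w hw} with hSK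
  have hdense : (Submodule.span ℂ SK).topologicalClosure = ⊤ := by
    rw [Submodule.topologicalClosure_eq_top_iff]
    rw [Submodule.eq_bot_iff]
    intro x hx
    have hx' : ∀ u ∈ Submodule.span ℂ SK, ⟪u, x⟫_ℂ = 0 :=
      (Submodule.mem_orthogonal _ x).mp hx
    apply toFun_injective
    intro z hzD
    have hz := mem_D_iff.mp hzD
    have h0 := hx' (kern z hz) (Submodule.subset_span ⟨z, hz, rfl⟩)
    rw [inner_kern] at h0
    rw [h0, tF_zero]
  have hdenseSet : closure ((Submodule.span ℂ SK : Submodule ℂ H2) : Set H2) = Set.univ := by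
    have h := congrArg (fun (K : Submodule ℂ H2) => (K : Set H2)) hdense
    simpa [Submodule.topologicalClosure_coe] using h
  -- toFun of kernels
  have tFkern : ∀ (w : ℂ) (hw : ‖w‖ < 1) (u : ℂ), ‖u‖ < 1 →
      H2.toFun (kern w hw) u = (1 - u * conj w)⁻¹ := by
    intro w hw u hu
    have h1 : ‖conj w * u‖ < 1 := by
      rw [norm_mul, RCLike.norm_conj]
      nlinarith [norm_nonneg w, norm_nonneg u]
    have h2 : H2.toFun (kern w hw) u = ∑' n : ℕ, (conj w * u) ^ n := by
      apply tsum_congr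
      intro n
      rw [kern_apply, mul_pow]
    rw [h2, tsum_geometric_of_norm_lt_one h1]
    rw [show (1:ℂ) - u * conj w = 1 - conj w * u from by ring]
  -- symmetry on kernels
  have hSym0 : ∀ (w : ℂ) (hw : ‖w‖ < 1) (v : ℂ) (hv : ‖v‖ < 1),
      H2.toFun (J (kern w hw)) v = H2.toFun (J (kern v hv)) w := by
    intro w hw v hv
    rw [hJ' (kern w hw) v hv, hJ' (kern v hv) w hw,
      tFkern w hw (phi l v) (phi_mem hl' hl0 hv), tFkern v hv (phi l w) (phi_mem hl' hl0 hw)]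
    exact sym_identity hl' hl0 hv hw
  -- symmetry: first argument extended to all of H2
  have stepA : ∀ (v : ℂ) (hv : ‖v‖ < 1) (f : H2),
      ⟪J f, kern v hv⟫_ℂ = ⟪J (kern v hv), f⟫_ℂ := by
    intro v hv f
    have hC : IsClosed {u : H2 | ⟪J u, kern v hv⟫_ℂ = ⟪J (kern v hv), u⟫_ℂ} := by
      apply isClosed_eq
      · have e : (fun u : H2 => ⟪J u, kern v hv⟫_ℂ)
            = fun u : H2 => conj ⟪kern v hv, J u⟫_ℂ := by
          funext u; rw [inner_conj_symm]
        rw [e]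
        exact Complex.continuous_conj.comp ((continuous_const.inner continuous_id).comp hJcont)
      · exact continuous_const.inner continuous_id
    have hspan : ∀ u ∈ Submodule.span ℂ SK,
        u ∈ {u : H2 | ⟪J u, kern v hv⟫_ℂ = ⟪J (kern v hv), u⟫_ℂ} := by
      intro u hu
      refine Submodule.span_induction ?_ ?_ ?_ ?_ hu
      · rintro g ⟨w, hw, rfl⟩
        show ⟪J (kern w hw), kern v hv⟫_ℂ = ⟪J (kern v hv), kern w hw⟫_ℂ
        rw [← inner_conj_symm (J (kern w hw)) (kern v hv),
          ← inner_conj_symm (J (kern v hv)) (kern w hw), inner_kern, inner_kern]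
        exact congrArg conj (hSym0 w hw v hv)
      · show ⟪J 0, kern v hv⟫_ℂ = ⟪J (kern v hv), (0:H2)⟫_ℂ
        rw [hJzero, inner_zero_left, inner_zero_right]
      · intro a b _ _ hpa hpb
        show ⟪J (a + b), kern v hv⟫_ℂ = ⟪J (kern v hv), a + b⟫_ℂ
        rw [hJadd, inner_add_left, inner_add_right, hpa, hpb]
      · intro c a _ hpa
        show ⟪J (c • a), kern v hv⟫_ℂ = ⟪J (kern v hv), c • a⟫_ℂ
        rw [hJsmul, inner_smul_left, inner_smul_right, Complex.conj_conj, hpa]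
    have hf : f ∈ closure ((Submodule.span ℂ SK : Submodule ℂ H2) : Set H2) := by
      rw [hdenseSet]; trivial
    exact closure_minimal hspan hC hf
  -- symmetry: fully general
  have stepB : ∀ f g : H2, ⟪J f, g⟫_ℂ = ⟪J g, f⟫_ℂ := by
    intro f g
    have hC : IsClosed {v : H2 | ⟪J f, v⟫_ℂ = ⟪J v, f⟫_ℂ} := by
      apply isClosed_eq
      · exact continuous_const.inner continuous_id
      · have e : (fun v : H2 => ⟪J v, f⟫_ℂ) = fun v : H2 => conj ⟪f, J v⟫_ℂ := by
          funext v; rw [inner_conj_symm]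
        rw [e]
        exact Complex.continuous_conj.comp ((continuous_const.inner continuous_id).comp hJcont)
    have hspan : ∀ v ∈ Submodule.span ℂ SK,
        v ∈ {v : H2 | ⟪J f, v⟫_ℂ = ⟪J v, f⟫_ℂ} := by
      intro v hv
      refine Submodule.span_induction ?_ ?_ ?_ ?_ hv
      · rintro g' ⟨w, hw, rfl⟩
        exact stepA w hw f
      · show ⟪J f, (0:H2)⟫_ℂ = ⟪J 0, f⟫_ℂ
        rw [hJzero, inner_zero_left, inner_zero_right]
      · intro a b _ _ hpa hpb
        show ⟪J f, a + b⟫_ℂ = ⟪J (a + b), f⟫_ℂ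
        rw [hJadd, inner_add_left, inner_add_right, hpa, hpb]
      · intro c a _ hpa
        show ⟪J f, c • a⟫_ℂ = ⟪J (c • a), f⟫_ℂ
        rw [hJsmul, inner_smul_left, inner_smul_right, Complex.conj_conj, hpa]
    have hg : g ∈ closure ((Submodule.span ℂ SK : Submodule ℂ H2) : Set H2) := by
      rw [hdenseSet]; trivial
    exact closure_minimal hspan hC hg
  -- isometry
  intro f
  have h1 : ⟪J f, J f⟫_ℂ = ⟪f, f⟫_ℂ := by
    rw [stepB f (J f), hJinv f]
  have h3 : ‖J f‖ ^ 2 = ‖f‖ ^ 2 := by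
    rw [← inner_self_eq_norm_sq (𝕜 := ℂ), ← inner_self_eq_norm_sq (𝕜 := ℂ), h1]
  rw [← Real.sqrt_sq (norm_nonneg (J f)), h3, Real.sqrt_sq (norm_nonneg f)]
end
end

section
/- Let ℰ be a densely defined first-order differential operator on H² with symbols ψ₀, ψ₁. Then for every w ∈ 𝔻 and m ∈ ℕ, K_w^{[m]} ∈ dom(ℰ*) and ℰ*K_w^{[m]} = conj(ψ₀^{(m)}(w))·K_w + Σ_{j=1}^{m} [ C(m,j)·conj(ψ₀^{(m−j)}(w)) + C(m,j−1)·conj(ψ₁^{(m−j+1)}(w)) ]·K_w^{[j]} + conj(ψ₁(w))·K_w^{[m+1]}. -/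
open Complex ComplexConjugate Metric Filter

noncomputable section

/-- `IsEof ψ₀ ψ₁ f g` : the function represented by `g` equals `ψ₀·f + ψ₁·f′` on `𝔻`,
i.e. `g = E(ψ₀,ψ₁) f`. -/
def IsEof (ψ₀ ψ₁ : ℂ → ℂ) (f g : H2) : Prop :=
  ∀ z ∈ 𝔻, H2.toFun g z = ψ₀ z * H2.toFun f z + ψ₁ z * deriv (H2.toFun f) z

namespace Stmt5Aux

/-- Power series sum. -/
def Fn (a : ℕ → ℂ) (z : ℂ) : ℂ := ∑' n, a n * z ^ n

/-- Differentiation operator on coefficient sequences. -/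
def Dop (a : ℕ → ℂ) : ℕ → ℂ := fun n => ((n : ℂ) + 1) * a (n + 1)

/-- Coefficients summable against every geometric r^n, r < 1. -/
def Sm (a : ℕ → ℂ) : Prop := ∀ r : ℝ, 0 ≤ r → r < 1 → Summable (fun n => ‖a n‖ * r ^ n)

set_option maxHeartbeats 1000000 in
lemma Sm.dop {a : ℕ → ℂ} (ha : Sm a) : Sm (Dop a) := by
  intro r hr0 hr1
  set r' : ℝ := (r + 1) / 2 with hr'def
  have hr'0 : 0 < r' := by positivity
  have hr'1 : r' < 1 := by rw [hr'def]; linarith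
  have hrr' : r < r' := by rw [hr'def]; linarith
  have S0 : Summable (fun n => ‖a n‖ * r' ^ n) := ha r' hr'0.le hr'1
  have S1 : Summable (fun n => ‖a (n + 1)‖ * r' ^ n) := by
    have h2 : Summable (fun n => ‖a (n + 1)‖ * r' ^ (n + 1)) :=
      (summable_nat_add_iff 1).mpr S0
    have h3 := h2.mul_right r'⁻¹
    refine h3.congr fun n => ?_
    rw [pow_succ, mul_assoc, mul_assoc, mul_inv_cancel₀ hr'0.ne', mul_one]
  set x : ℝ := r / r' with hxdef
  have hx0 : 0 ≤ x := by positivity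
  have hx1 : x < 1 := by rw [hxdef, div_lt_one hr'0]; exact hrr'
  have hxr : x * r' = r := div_mul_cancel₀ r hr'0.ne'
  have htend : Tendsto (fun n : ℕ => ((n : ℝ) + 1) * x ^ n) atTop (nhds 0) := by
    have hs : Summable (fun n : ℕ => ((n : ℝ) + 1) * x ^ n) := by
      have h1 : Summable (fun n : ℕ => (n : ℝ) ^ 1 * x ^ n) :=
        summable_pow_mul_geometric_of_norm_lt_one 1 (by rwa [Real.norm_eq_abs, _root_.abs_of_nonneg hx0])
      have h2 : Summable (fun n : ℕ => x ^ n) :=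
        summable_geometric_of_lt_one hx0 hx1
      simpa [add_mul, pow_one] using h1.add h2
    exact hs.tendsto_atTop_zero
  have hev : ∀ᶠ (n : ℕ) in atTop, ((n : ℝ) + 1) * x ^ n ≤ 1 :=
    (htend.eventually_lt_const (by norm_num)).mono fun n h => h.le
  refine Summable.of_norm_bounded_eventually_nat S1 ?_
  filter_upwards [hev] with n hn
  have hnorm : ‖Dop a n‖ = ((n : ℝ) + 1) * ‖a (n + 1)‖ := by
    rw [Dop, norm_mul]
    congr 1
    have : ((n : ℂ) + 1) = ((n + 1 : ℕ) : ℂ) := by push_cast; ring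
    rw [this, Complex.norm_natCast]; push_cast; ring
  rw [Real.norm_eq_abs, _root_.abs_of_nonneg (by positivity)]
  rw [hnorm]
  calc ((n : ℝ) + 1) * ‖a (n + 1)‖ * r ^ n
      = (((n : ℝ) + 1) * x ^ n) * (‖a (n + 1)‖ * r' ^ n) := by
        rw [← hxr, mul_pow]; ring
    _ ≤ 1 * (‖a (n + 1)‖ * r' ^ n) := by
        apply mul_le_mul_of_nonneg_right hn (by positivity)
    _ = ‖a (n + 1)‖ * r' ^ n := one_mul _

lemma Sm.iterate {a : ℕ → ℂ} (ha : Sm a) (j : ℕ) : Sm (Dop^[j] a) := by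
  induction j with
  | zero => exact ha
  | succ j ih => rw [Function.iterate_succ_apply']; exact ih.dop

lemma Sm.summable {a : ℕ → ℂ} (ha : Sm a) {z : ℂ} {r : ℝ} (hz : ‖z‖ ≤ r) (hr1 : r < 1) :
    Summable (fun n => a n * z ^ n) := by
  have hr0 : 0 ≤ r := le_trans (norm_nonneg z) hz
  refine Summable.of_norm_bounded (ha r hr0 hr1) fun n => ?_
  rw [norm_mul, norm_pow]
  exact mul_le_mul_of_nonneg_left (pow_le_pow_left₀ (norm_nonneg z) hz n) (norm_nonneg _)


lemma hasDerivAt_Fn {a : ℕ → ℂ} (ha : Sm a) {z : ℂ} (hz : ‖z‖ < 1) :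
    HasDerivAt (Fn a) (Fn (Dop a) z) z := by
  set r : ℝ := (‖z‖ + 1) / 2 with hrdef
  have hr0 : 0 < r := by positivity
  have hr1 : r < 1 := by rw [hrdef]; linarith
  have hzr : ‖z‖ < r := by rw [hrdef]; linarith
  set u : ℕ → ℝ := fun n => (n : ℝ) * ‖a n‖ * r ^ (n - 1) with hudef
  have hu : Summable u := by
    refine (summable_nat_add_iff 1).mp ?_
    have h1 : Summable (fun n => ‖Dop a n‖ * r ^ n) := ha.dop r hr0.le hr1
    refine h1.congr fun n => ?_
    have hnorm : ‖Dop a n‖ = ((n : ℝ) + 1) * ‖a (n + 1)‖ := by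
      rw [Dop, norm_mul]
      congr 1
      have : ((n : ℂ) + 1) = ((n + 1 : ℕ) : ℂ) := by push_cast; ring
      rw [this, Complex.norm_natCast]; push_cast; ring
    rw [hnorm, hudef]
    simp only [Nat.add_sub_cancel]
    push_cast; ring
  have hderiv : ∀ (n : ℕ) (y : ℂ), y ∈ ball (0 : ℂ) r →
      HasDerivAt (fun y => a n * y ^ n) (a n * ((n : ℂ) * y ^ (n - 1))) y :=
    fun n y _ => (hasDerivAt_pow n y).const_mul (a n)
  have hbound : ∀ (n : ℕ) (y : ℂ), y ∈ ball (0 : ℂ) r →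
      ‖a n * ((n : ℂ) * y ^ (n - 1))‖ ≤ u n := by
    intro n y hy
    rw [mem_ball_zero_iff] at hy
    rw [norm_mul, norm_mul, norm_pow, Complex.norm_natCast]
    calc ‖a n‖ * ((n : ℝ) * ‖y‖ ^ (n - 1)) ≤ ‖a n‖ * ((n : ℝ) * r ^ (n - 1)) := by
          apply mul_le_mul_of_nonneg_left _ (norm_nonneg _)
          exact mul_le_mul_of_nonneg_left
            (pow_le_pow_left₀ (norm_nonneg y) hy.le _) (Nat.cast_nonneg n)
      _ = u n := by rw [hudef]; ring
  have hy0 : (0 : ℂ) ∈ ball (0 : ℂ) r := mem_ball_self hr0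
  have hsum0 : Summable (fun n => a n * (0 : ℂ) ^ n) := by
    apply summable_of_ne_finset_zero (s := {0})
    intro n hn
    simp only [Finset.mem_singleton] at hn
    rw [zero_pow hn, mul_zero]
  have H := hasDerivAt_tsum_of_isPreconnected hu isOpen_ball
    (convex_ball (0:ℂ) r).isPreconnected hderiv hbound hy0 hsum0
    (mem_ball_zero_iff.mpr hzr)
  have hsumd : Summable (fun n => a n * ((n : ℂ) * z ^ (n - 1))) := by
    refine Summable.of_norm_bounded hu fun n => hbound n z (mem_ball_zero_iff.mpr hzr)
  have heq : ∑' n, a n * ((n : ℂ) * z ^ (n - 1)) = Fn (Dop a) z := by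
    rw [Summable.tsum_eq_zero_add hsumd]
    simp only [Nat.cast_zero, zero_mul, mul_zero, zero_add]
    rw [Fn]
    apply tsum_congr
    intro n
    simp only [Nat.add_sub_cancel, Dop]
    push_cast; ring
  rw [← heq]
  exact H

lemma Fn_zero (a : ℕ → ℂ) : Fn a 0 = a 0 := by
  rw [Fn]
  rw [tsum_eq_single 0 (fun n hn => by rw [zero_pow hn, mul_zero])]
  simp

lemma iteratedDeriv_Fn {a : ℕ → ℂ} (ha : Sm a) (j : ℕ) :
    ∀ {z : ℂ}, ‖z‖ < 1 → iteratedDeriv j (Fn a) z = Fn (Dop^[j] a) z := by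
  induction j with
  | zero => intro z _; simp [iteratedDeriv_zero]
  | succ j ih =>
    intro z hz
    rw [iteratedDeriv_succ]
    have hev : iteratedDeriv j (Fn a) =ᶠ[nhds z] Fn (Dop^[j] a) := by
      filter_upwards [isOpen_ball.mem_nhds (mem_ball_zero_iff.mpr hz)] with y hy
      exact ih (mem_ball_zero_iff.mp hy)
    rw [hev.deriv_eq]
    rw [(hasDerivAt_Fn (ha.iterate j) hz).deriv]
    rw [← Function.iterate_succ_apply' Dop j a]

lemma Dop_iterate (a : ℕ → ℂ) (j : ℕ) : ∀ n, Dop^[j] a n = ((n + j).descFactorial j : ℂ) * a (n + j) := by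
  induction j with
  | zero => intro n; simp
  | succ j ih =>
    intro n
    rw [Function.iterate_succ_apply']
    show ((n : ℂ) + 1) * (Dop^[j] a) (n + 1) = _
    rw [ih]
    have h1 : n + (j + 1) = (n + 1) + j := by omega
    rw [h1]
    have h2 : (n + 1 + j).descFactorial (j + 1) = (n + 1) * (n + 1 + j).descFactorial j := by
      rw [Nat.descFactorial_succ]
      congr 1
      omega
    rw [h2]
    push_cast
    ring


lemma hasSum_kernel {𝕂 : Type*} [RCLike 𝕂] (j : ℕ) {q u : 𝕂} (h : ‖q * u‖ < 1) :
    HasSum (fun n => (j.factorial : 𝕂) * (n.choose j : 𝕂) * q ^ (n - j) * u ^ n)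
      ((j.factorial : 𝕂) * u ^ j / (1 - q * u) ^ (j + 1)) := by
  set f : ℕ → 𝕂 := fun n => (j.factorial : 𝕂) * (n.choose j : 𝕂) * q ^ (n - j) * u ^ n with hf
  have H := hasSum_choose_mul_geometric_of_norm_lt_one j h
  have H2 := H.mul_left ((j.factorial : 𝕂) * u ^ j)
  have hshift : HasSum (fun n => f (n + j))
      ((j.factorial : 𝕂) * u ^ j / (1 - q * u) ^ (j + 1) - ∑ i ∈ Finset.range j, f i) := by
    have hzero : ∑ i ∈ Finset.range j, f i = 0 := by
      apply Finset.sum_eq_zero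
      intro i hi
      rw [hf]
      simp [Nat.choose_eq_zero_of_lt (Finset.mem_range.1 hi)]
    rw [hzero, sub_zero]
    have hfun : (fun n => f (n + j)) =
        fun n => (j.factorial : 𝕂) * u ^ j * ((((n + j).choose j : ℕ) : 𝕂) * (q * u) ^ n) := by
      funext n
      rw [hf]
      simp only [Nat.add_sub_cancel]
      rw [mul_pow, pow_add]
      ring
    rw [hfun]
    rw [← mul_one_div]
    exact H2
  exact (hasSum_nat_add_iff' j).1 hshift

lemma tsum_shift {g : ℕ → ℂ} (j : ℕ) (h0 : ∀ i < j, g i = 0)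
    (hs : Summable fun n => g (n + j)) : ∑' n, g n = ∑' n, g (n + j) := by
  have h1 : HasSum g (∑' n, g (n + j)) := by
    refine (hasSum_nat_add_iff' j).1 ?_
    rw [Finset.sum_eq_zero fun i hi => h0 i (Finset.mem_range.1 hi), sub_zero]
    exact hs.hasSum
  exact h1.tsum_eq

lemma Sm_kernel (j : ℕ) {q : ℂ} (hq : ‖q‖ < 1) :
    Sm (fun n => (j.factorial : ℂ) * (n.choose j : ℂ) * q ^ (n - j)) := by
  intro r hr0 hr1
  have hqr : ‖(‖q‖ : ℝ) * r‖ < 1 := by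
    rw [Real.norm_eq_abs, _root_.abs_of_nonneg (by positivity)]
    calc ‖q‖ * r ≤ 1 * r := mul_le_mul_of_nonneg_right hq.le hr0
      _ = r := one_mul r
      _ < 1 := hr1
  have H := (hasSum_kernel (𝕂 := ℝ) j hqr).summable
  refine H.congr fun n => ?_
  rw [norm_mul, norm_mul, norm_pow, Complex.norm_natCast, Complex.norm_natCast]

lemma Sm_of_lp (f : lp (fun _ : ℕ => ℂ) 2) : Sm ⇑f := by
  intro r hr0 hr1
  refine Summable.of_nonneg_of_le (fun n => by positivity) (fun n => ?_)
    ((summable_geometric_of_lt_one hr0 hr1).mul_left ‖f‖)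
  exact mul_le_mul_of_nonneg_right
    (lp.norm_apply_le_norm (by norm_num) f n) (pow_nonneg hr0 n)

lemma coeff_eq {a b : ℕ → ℂ} (ha : Sm a) (hb : Sm b)
    (h : ∀ z : ℂ, ‖z‖ < 1 → Fn a z = Fn b z) : a = b := by
  funext n
  have h1 : iteratedDeriv n (Fn a) 0 = iteratedDeriv n (Fn b) 0 := by
    apply Filter.EventuallyEq.iteratedDeriv_eq
    filter_upwards [isOpen_ball.mem_nhds
      (mem_ball_zero_iff.mpr (by norm_num : ‖(0:ℂ)‖ < 1))] with y hy
    exact h y (mem_ball_zero_iff.mp hy)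
  rw [iteratedDeriv_Fn ha n (by norm_num), iteratedDeriv_Fn hb n (by norm_num),
    Fn_zero, Fn_zero, Dop_iterate, Dop_iterate] at h1
  simp only [Nat.zero_add, Nat.descFactorial_self] at h1
  exact mul_left_cancel₀ (Nat.cast_ne_zero.mpr (Nat.factorial_ne_zero n)) h1


lemma _root_.AnalyticOnNhd.iteratedDeriv' {s : Set ℂ} {p : ℂ → ℂ} (hp : AnalyticOnNhd ℂ p s) (k : ℕ) :
    AnalyticOnNhd ℂ (iteratedDeriv k p) s := by
  induction k with
  | zero => simpa [iteratedDeriv_zero]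
  | succ k ih => rw [iteratedDeriv_succ]; exact ih.deriv

lemma iteratedDeriv_add_of_analytic {s : Set ℂ} (hs : IsOpen s) {F G : ℂ → ℂ}
    (hF : AnalyticOnNhd ℂ F s) (hG : AnalyticOnNhd ℂ G s) (k : ℕ) :
    ∀ z ∈ s, iteratedDeriv k (fun y => F y + G y) z =
      iteratedDeriv k F z + iteratedDeriv k G z := by
  induction k with
  | zero => intro z hz; simp
  | succ k ih =>
    intro z hz
    rw [iteratedDeriv_succ, iteratedDeriv_succ, iteratedDeriv_succ]
    have hev : iteratedDeriv k (fun y => F y + G y) =ᶠ[nhds z]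
        fun y => iteratedDeriv k F y + iteratedDeriv k G y := by
      filter_upwards [hs.mem_nhds hz] with y hy using ih y hy
    rw [hev.deriv_eq]
    exact deriv_add (hF.iteratedDeriv' k z hz).differentiableAt
      (hG.iteratedDeriv' k z hz).differentiableAt

lemma iteratedDeriv_mul_of_analytic {s : Set ℂ} (hs : IsOpen s) {p g : ℂ → ℂ}
    (hp : AnalyticOnNhd ℂ p s) (hg : AnalyticOnNhd ℂ g s) (k : ℕ) :
    ∀ z ∈ s, iteratedDeriv k (fun y => p y * g y) z =
      ∑ i ∈ Finset.range (k + 1),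
        (k.choose i : ℂ) * iteratedDeriv (k - i) p z * iteratedDeriv i g z := by
  induction k with
  | zero => intro z hz; simp
  | succ k ih =>
    intro z hz
    rw [iteratedDeriv_succ]
    have hev : iteratedDeriv k (fun y => p y * g y) =ᶠ[nhds z]
        fun y => ∑ i ∈ Finset.range (k + 1),
          (k.choose i : ℂ) * iteratedDeriv (k - i) p y * iteratedDeriv i g y := by
      filter_upwards [hs.mem_nhds hz] with y hy using ih y hy
    rw [hev.deriv_eq]
    have hterm : ∀ i ∈ Finset.range (k + 1),
        HasDerivAt (fun y => (k.choose i : ℂ) * iteratedDeriv (k - i) p y * iteratedDeriv i g y)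
          ((k.choose i : ℂ) * iteratedDeriv (k - i + 1) p z * iteratedDeriv i g z
            + (k.choose i : ℂ) * iteratedDeriv (k - i) p z * iteratedDeriv (i + 1) g z) z := by
      intro i _
      have h1 := (hp.iteratedDeriv' (k - i) z hz).differentiableAt.hasDerivAt
      rw [← iteratedDeriv_succ] at h1
      have h2 := (hg.iteratedDeriv' i z hz).differentiableAt.hasDerivAt
      rw [← iteratedDeriv_succ] at h2
      have h3 := (h1.const_mul ((k.choose i : ℂ))).mul h2
      convert h3 using 1
      try ring
      all_goals rfl
    rw [(HasDerivAt.fun_sum hterm).deriv]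
    set P : ℕ → ℂ := fun n => iteratedDeriv n p z with hPdef
    set G : ℕ → ℂ := fun n => iteratedDeriv n g z with hGdef
    rw [Finset.sum_add_distrib]
    rw [Finset.sum_range_succ' (fun i => (((k+1).choose i : ℕ) : ℂ) * P (k + 1 - i) * G i) (k+1)]
    have hf0 : (((k+1).choose 0 : ℕ) : ℂ) * P (k + 1 - 0) * G 0 = P (k+1) * G 0 := by
      simp
    rw [hf0]
    have hsplit : ∀ i ∈ Finset.range (k + 1),
        (((k+1).choose (i+1) : ℕ) : ℂ) * P (k + 1 - (i+1)) * G (i+1)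
          = (k.choose i : ℂ) * P (k - i) * G (i+1)
            + (k.choose (i+1) : ℂ) * P (k - i) * G (i+1) := by
      intro i hi
      have h5 : k + 1 - (i + 1) = k - i := by omega
      rw [h5, Nat.choose_succ_succ]
      push_cast
      ring
    rw [Finset.sum_congr rfl hsplit, Finset.sum_add_distrib]
    have hS1 : ∑ i ∈ Finset.range (k + 1), (k.choose i : ℂ) * P (k - i + 1) * G i
        = (∑ i ∈ Finset.range (k + 1), (k.choose (i+1) : ℂ) * P (k - i) * G (i+1))
          + P (k+1) * G 0 := by
      rw [Finset.sum_range_succ' (fun i => (k.choose i : ℂ) * P (k - i + 1) * G i) k]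
      rw [Finset.sum_range_succ (fun i => (k.choose (i+1) : ℂ) * P (k - i) * G (i+1)) k]
      have hlast : (k.choose (k+1) : ℂ) * P (k - k) * G (k+1) = 0 := by
        simp [Nat.choose_succ_self]
      rw [hlast, add_zero]
      congr 1
      · apply Finset.sum_congr rfl
        intro i hi
        have h6 : k - (i + 1) + 1 = k - i := by
          have := Finset.mem_range.1 hi; omega
        rw [h6]
      · simp
    rw [hS1]
    ring

end Stmt5Aux


/-- for a densely defined first-order differential operator `ℰ` with symbols
`ψ₀, ψ₁`, for `w ∈ 𝔻` and `m ∈ ℕ`, `K_w^{[m]} ∈ dom(ℰ*)` and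
`ℰ*K_w^{[m]} = conj(ψ₀^{(m)}(w))·K_w
  + Σ_{j=1}^{m} [C(m,j)·conj(ψ₀^{(m−j)}(w)) + C(m,j−1)·conj(ψ₁^{(m−j+1)}(w))]·K_w^{[j]}
  + conj(ψ₁(w))·K_w^{[m+1]}`. -/
theorem stmt5 (ψ₀ ψ₁ : ℂ → ℂ)
    (hψ₀ : DifferentiableOn ℂ ψ₀ 𝔻) (hψ₁ : DifferentiableOn ℂ ψ₁ 𝔻)
    (ℰ : H2 →ₗ.[ℂ] H2)
    (hsub : ∀ f : ℰ.domain, IsEof ψ₀ ψ₁ f.1 (ℰ f))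
    (hdense : Dense (ℰ.domain : Set H2))
    (w : ℂ) (hw : w ∈ 𝔻) (m : ℕ) (K : ℕ → H2)
    (hK : ∀ j ≤ m + 1, ∀ u ∈ 𝔻,
      H2.toFun (K j) u = (j.factorial : ℂ) * u ^ j / (1 - conj w * u) ^ (j + 1)) :
    ∃ h : K m ∈ (LinearPMap.adjoint ℰ).domain,
      (LinearPMap.adjoint ℰ) ⟨K m, h⟩ =
        conj (iteratedDeriv m ψ₀ w) • K 0 +
        (∑ j ∈ Finset.Icc 1 m,
          ((m.choose j : ℂ) * conj (iteratedDeriv (m - j) ψ₀ w) +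
            (m.choose (j - 1) : ℂ) * conj (iteratedDeriv (m - j + 1) ψ₁ w)) • K j) +
        conj (ψ₁ w) • K (m + 1) := by
  classical
  have hw1 : ‖w‖ < 1 := mem_ball_zero_iff.mp hw
  have hq1 : ‖(conj w : ℂ)‖ < 1 := by rwa [RCLike.norm_conj]
  -- Step 1: coefficients of K j
  have hKcoe : ∀ j, j ≤ m + 1 → ⇑(K j) =
      fun n => (j.factorial : ℂ) * (n.choose j : ℂ) * (conj w : ℂ) ^ (n - j) := by
    intro j hj
    apply Stmt5Aux.coeff_eq (Stmt5Aux.Sm_of_lp (K j)) (Stmt5Aux.Sm_kernel j hq1)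
    intro z hz
    have h1 : H2.toFun (K j) z = (j.factorial : ℂ) * z ^ j / (1 - conj w * z) ^ (j + 1) :=
      hK j hj z (mem_ball_zero_iff.mpr hz)
    have hqz : ‖(conj w : ℂ) * z‖ < 1 := by
      rw [norm_mul, RCLike.norm_conj]
      calc ‖w‖ * ‖z‖ ≤ 1 * ‖z‖ := mul_le_mul_of_nonneg_right hw1.le (norm_nonneg z)
        _ = ‖z‖ := one_mul _
        _ < 1 := hz
    have h2 : Stmt5Aux.Fn
        (fun n => (j.factorial : ℂ) * (n.choose j : ℂ) * (conj w : ℂ) ^ (n - j)) z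
        = (j.factorial : ℂ) * z ^ j / (1 - conj w * z) ^ (j + 1) :=
      (Stmt5Aux.hasSum_kernel j hqz).tsum_eq
    rw [h2]
    exact h1
  -- Step 2: reproducing property of the kernels
  have hinner : ∀ j, j ≤ m + 1 → ∀ f : H2,
      (inner ℂ (K j) f : ℂ) = iteratedDeriv j (Stmt5Aux.Fn ⇑f) w := by
    intro j hj f
    have hsm : Stmt5Aux.Sm ⇑f := Stmt5Aux.Sm_of_lp f
    have hsum2 : Summable (fun n => Stmt5Aux.Dop^[j] ⇑f n * w ^ n) :=
      (hsm.iterate j).summable le_rfl hw1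
    have hsum3 : Summable (fun n => ((n + j).descFactorial j : ℂ) * f (n + j) * w ^ n) :=
      hsum2.congr fun n => by rw [Stmt5Aux.Dop_iterate]
    have hptwise : ∀ n : ℕ,
        (j.factorial : ℂ) * ((n + j).choose j : ℂ) * w ^ (n + j - j) * f (n + j)
          = ((n + j).descFactorial j : ℂ) * f (n + j) * w ^ n := by
      intro n
      rw [Nat.add_sub_cancel, Nat.descFactorial_eq_factorial_mul_choose]
      push_cast
      ring
    calc (inner ℂ (K j) f : ℂ)
        = ∑' n, conj ((K j) n) * f n := by
          rw [lp.inner_eq_tsum]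
          simp only [RCLike.inner_apply']
      _ = ∑' n, (j.factorial : ℂ) * (n.choose j : ℂ) * w ^ (n - j) * f n := by
          apply tsum_congr
          intro n
          rw [hKcoe j hj]
          simp only [map_mul, map_pow, map_natCast, Complex.conj_conj]
      _ = ∑' n, ((n + j).descFactorial j : ℂ) * f (n + j) * w ^ n := by
          rw [Stmt5Aux.tsum_shift j
            (fun i hij => by simp [Nat.choose_eq_zero_of_lt hij])
            (hsum3.congr fun n => (hptwise n).symm)]
          exact tsum_congr hptwise
      _ = Stmt5Aux.Fn (Stmt5Aux.Dop^[j] ⇑f) w := by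
          rw [Stmt5Aux.Fn]
          exact (tsum_congr fun n => by rw [Stmt5Aux.Dop_iterate]).symm
      _ = iteratedDeriv j (Stmt5Aux.Fn ⇑f) w :=
          (Stmt5Aux.iteratedDeriv_Fn hsm j hw1).symm
  have hwball : w ∈ ball (0:ℂ) 1 := mem_ball_zero_iff.mpr hw1
  -- Step 3: Leibniz expansion of ⟪K m, ℰ x⟫
  have hE : ∀ x : ℰ.domain, (inner ℂ (K m) (ℰ x) : ℂ) =
      (∑ i ∈ Finset.range (m + 1), (m.choose i : ℂ) * iteratedDeriv (m - i) ψ₀ w *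
        iteratedDeriv i (Stmt5Aux.Fn ⇑(x : H2)) w)
      + ∑ i ∈ Finset.range (m + 1), (m.choose i : ℂ) * iteratedDeriv (m - i) ψ₁ w *
        iteratedDeriv (i + 1) (Stmt5Aux.Fn ⇑(x : H2)) w := by
    intro x
    rw [hinner m (by omega) (ℰ x)]
    have hsma : Stmt5Aux.Sm ⇑(x : H2) := Stmt5Aux.Sm_of_lp _
    have hAf : AnalyticOnNhd ℂ (Stmt5Aux.Fn ⇑(x : H2)) (ball (0:ℂ) 1) := by
      apply DifferentiableOn.analyticOnNhd _ isOpen_ball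
      intro z hz
      exact (Stmt5Aux.hasDerivAt_Fn hsma
        (mem_ball_zero_iff.mp hz)).differentiableAt.differentiableWithinAt
    have hAf' : AnalyticOnNhd ℂ (Stmt5Aux.Fn (Stmt5Aux.Dop ⇑(x : H2))) (ball (0:ℂ) 1) := by
      apply DifferentiableOn.analyticOnNhd _ isOpen_ball
      intro z hz
      exact (Stmt5Aux.hasDerivAt_Fn hsma.dop
        (mem_ball_zero_iff.mp hz)).differentiableAt.differentiableWithinAt
    have hA0 : AnalyticOnNhd ℂ ψ₀ (ball (0:ℂ) 1) := hψ₀.analyticOnNhd isOpen_ball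
    have hA1 : AnalyticOnNhd ℂ ψ₁ (ball (0:ℂ) 1) := hψ₁.analyticOnNhd isOpen_ball
    have hEq : ∀ z ∈ ball (0:ℂ) 1, Stmt5Aux.Fn ⇑(ℰ x) z
        = ψ₀ z * Stmt5Aux.Fn ⇑(x : H2) z + ψ₁ z * Stmt5Aux.Fn (Stmt5Aux.Dop ⇑(x : H2)) z := by
      intro z hz
      have h1 := hsub x z hz
      have hd : deriv (H2.toFun (x : H2)) z = Stmt5Aux.Fn (Stmt5Aux.Dop ⇑(x : H2)) z :=
        (Stmt5Aux.hasDerivAt_Fn hsma (mem_ball_zero_iff.mp hz)).deriv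
      show H2.toFun (ℰ x) z = _
      rw [h1, hd]
      rfl
    have h2 : iteratedDeriv m (Stmt5Aux.Fn ⇑(ℰ x)) w
        = iteratedDeriv m (fun z => ψ₀ z * Stmt5Aux.Fn ⇑(x : H2) z
            + ψ₁ z * Stmt5Aux.Fn (Stmt5Aux.Dop ⇑(x : H2)) z) w := by
      apply Filter.EventuallyEq.iteratedDeriv_eq
      filter_upwards [isOpen_ball.mem_nhds hwball] with y hy using hEq y hy
    rw [h2]
    rw [Stmt5Aux.iteratedDeriv_add_of_analytic isOpen_ball (hA0.mul hAf) (hA1.mul hAf') m w hwball]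
    rw [Stmt5Aux.iteratedDeriv_mul_of_analytic isOpen_ball hA0 hAf m w hwball]
    rw [Stmt5Aux.iteratedDeriv_mul_of_analytic isOpen_ball hA1 hAf' m w hwball]
    congr 1
    apply Finset.sum_congr rfl
    intro i _
    congr 1
    rw [Stmt5Aux.iteratedDeriv_Fn hsma.dop i hw1,
      Stmt5Aux.iteratedDeriv_Fn hsma (i + 1) hw1, Function.iterate_succ_apply]
  -- Step 4: the candidate adjoint vector
  set g₀ : H2 :=
      conj (iteratedDeriv m ψ₀ w) • K 0 +
        (∑ j ∈ Finset.Icc 1 m,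
          ((m.choose j : ℂ) * conj (iteratedDeriv (m - j) ψ₀ w) +
            (m.choose (j - 1) : ℂ) * conj (iteratedDeriv (m - j + 1) ψ₁ w)) • K j) +
        conj (ψ₁ w) • K (m + 1) with hg₀def
  have hg₀inner : ∀ f : H2, (inner ℂ g₀ f : ℂ) =
      iteratedDeriv m ψ₀ w * iteratedDeriv 0 (Stmt5Aux.Fn ⇑f) w +
        (∑ j ∈ Finset.Icc 1 m,
          ((m.choose j : ℂ) * iteratedDeriv (m - j) ψ₀ w +
            (m.choose (j - 1) : ℂ) * iteratedDeriv (m - j + 1) ψ₁ w) *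
              iteratedDeriv j (Stmt5Aux.Fn ⇑f) w) +
        ψ₁ w * iteratedDeriv (m + 1) (Stmt5Aux.Fn ⇑f) w := by
    intro f
    rw [hg₀def]
    rw [inner_add_left, inner_add_left, inner_smul_left, inner_smul_left, sum_inner]
    rw [hinner 0 (by omega) f, hinner (m + 1) le_rfl f]
    congr 2
    · rw [Complex.conj_conj]
    · apply Finset.sum_congr rfl
      intro j hj
      have hjm : j ≤ m + 1 := by
        have := (Finset.mem_Icc.1 hj).2; omega
      rw [inner_smul_left, hinner j hjm f]
      congr 1
      simp only [map_add, map_mul, map_natCast, Complex.conj_conj]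
    · rw [Complex.conj_conj]
  -- Step 5: the two expressions agree
  have hmain : ∀ x : ℰ.domain, (inner ℂ g₀ ((x : H2)) : ℂ) = inner ℂ (K m) (ℰ x) := by
    intro x
    rw [hg₀inner, hE]
    rw [← Finset.Ico_add_one_right_eq_Icc 1 m, Finset.sum_Ico_eq_sum_range]
    simp only [Nat.succ_sub_one, Nat.add_sub_cancel]
    rw [Finset.sum_range_succ'
      (fun i => (m.choose i : ℂ) * iteratedDeriv (m - i) ψ₀ w *
        iteratedDeriv i (Stmt5Aux.Fn ⇑(x : H2)) w) m]
    rw [Finset.sum_range_succ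
      (fun i => (m.choose i : ℂ) * iteratedDeriv (m - i) ψ₁ w *
        iteratedDeriv (i + 1) (Stmt5Aux.Fn ⇑(x : H2)) w) m]
    simp only [Nat.choose_zero_right, Nat.choose_self, Nat.sub_zero, Nat.sub_self,
      Nat.cast_one, one_mul, iteratedDeriv_zero]
    have hsplit : ∀ i ∈ Finset.range m,
        ((m.choose (1 + i) : ℂ) * iteratedDeriv (m - (1 + i)) ψ₀ w +
          (m.choose (1 + i - 1) : ℂ) * iteratedDeriv (m - (1 + i) + 1) ψ₁ w) *
            iteratedDeriv (1 + i) (Stmt5Aux.Fn ⇑(x : H2)) w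
        = (m.choose (i + 1) : ℂ) * iteratedDeriv (m - (i + 1)) ψ₀ w *
            iteratedDeriv (i + 1) (Stmt5Aux.Fn ⇑(x : H2)) w
          + (m.choose i : ℂ) * iteratedDeriv (m - i) ψ₁ w *
            iteratedDeriv (i + 1) (Stmt5Aux.Fn ⇑(x : H2)) w := by
      intro i hi
      have h6 : 1 + i - 1 = i := by omega
      have h7 : m - (1 + i) + 1 = m - i := by have := Finset.mem_range.1 hi; omega
      have h8 : 1 + i = i + 1 := by omega
      rw [h6, h7, h8]
      ring
    rw [Finset.sum_congr rfl hsplit, Finset.sum_add_distrib]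
    ring
  -- Step 6: conclude
  have hmem : K m ∈ (LinearPMap.adjoint ℰ).domain :=
    LinearPMap.mem_adjoint_domain_of_exists _ ⟨g₀, fun x => hmain x⟩
  exact ⟨hmem, LinearPMap.adjoint_apply_eq hdense ⟨K m, hmem⟩ (fun x => hmain x)⟩
end
end

section
/- Suppose ψ₀, ψ₁ are holomorphic on 𝔻, β ∈ ℂ with |β| = 1, and for all z, u ∈ 𝔻: ψ₀(u) + ψ₁(u)·conj(z)/(1 − u·conj(z)) = ψ₀(β·conj z) + ψ₁(β·conj z)·u·conj(β)/(1 − u·conj(z)). Then there exist constants a, b, c ∈ ℂ such that ψ₀(u) = a + bu and ψ₁(u) = bβ + cu + bu² for all u ∈ 𝔻. -/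
open Complex ComplexConjugate Metric Filter

noncomputable section

/-- if holomorphic `ψ₀, ψ₁` on `𝔻` satisfy the two-variable identity
`ψ₀(u) + ψ₁(u)·conj z/(1 − u·conj z) = ψ₀(β·conj z) + ψ₁(β·conj z)·u·conj β/(1 − u·conj z)`
for all `z, u ∈ 𝔻`, then `ψ₀(u) = a + bu` and `ψ₁(u) = bβ + cu + bu²` for constants `a,b,c`. -/
theorem stmt8 (β : ℂ) (hβ : ‖β‖ = 1) (ψ₀ ψ₁ : ℂ → ℂ)
    (hψ₀ : DifferentiableOn ℂ ψ₀ 𝔻) (hψ₁ : DifferentiableOn ℂ ψ₁ 𝔻)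
    (hid : ∀ z ∈ 𝔻, ∀ u ∈ 𝔻,
      ψ₀ u + ψ₁ u * conj z / (1 - u * conj z) =
        ψ₀ (β * conj z) + ψ₁ (β * conj z) * u * conj β / (1 - u * conj z)) :
    ∃ a b c : ℂ, ∀ u ∈ 𝔻, ψ₀ u = a + b * u ∧ ψ₁ u = b * β + c * u + b * u ^ 2 := by
  have hβ1 : conj β * β = 1 := by
    have h := Complex.mul_conj' β
    rw [hβ] at h
    push_cast at h
    linear_combination h
  have hmem : ∀ w : ℂ, w ∈ 𝔻 ↔ ‖w‖ < 1 := fun w => by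
    simp [𝔻, mem_ball_zero_iff]
  -- cleared-denominator identity
  have H : ∀ u ∈ 𝔻, ∀ w ∈ 𝔻,
      ψ₀ u * (1 - u * w) + ψ₁ u * w =
        ψ₀ (β * w) * (1 - u * w) + ψ₁ (β * w) * u * conj β := by
    intro u hu w hw
    have hzw : (conj w : ℂ) ∈ 𝔻 := by
      rw [hmem] at hw ⊢; simpa using hw
    have h := hid (conj w) hzw u hu
    rw [Complex.conj_conj] at h
    have hlt : ‖u * w‖ < 1 := by
      rw [norm_mul]
      rw [hmem] at hu hw
      nlinarith [norm_nonneg u, norm_nonneg w]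
    have hne : (1 : ℂ) - u * w ≠ 0 := sub_ne_zero.mpr fun h1 => by
      rw [← h1] at hlt; simp at hlt
    have hinv : (1 - u * w) * (1 - u * w)⁻¹ = 1 := mul_inv_cancel₀ hne
    simp only [div_eq_mul_inv] at h
    linear_combination (1 - u * w) * h - (ψ₁ u * w - ψ₁ (β * w) * u * conj β) * hinv
  have h0 : (0 : ℂ) ∈ 𝔻 := by rw [hmem]; norm_num
  set a := ψ₀ 0 with ha
  set b := ψ₁ 0 * conj β with hb
  -- ψ₀ is affine
  have hψ₀eq : ∀ u ∈ 𝔻, ψ₀ u = a + b * u := by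
    intro u hu
    have h := H u hu 0 h0
    simp only [mul_zero, sub_zero, mul_one, add_zero] at h
    rw [hb, ha]
    linear_combination h
  have hb0 : ψ₁ 0 = b * β := by
    rw [hb]; linear_combination -ψ₁ 0 * hβ1
  -- key functional equation for G u = ψ₁ u - b β - b u²
  have key : ∀ u ∈ 𝔻, ∀ w ∈ 𝔻,
      w * (ψ₁ u - b * β - b * u ^ 2) =
        u * conj β * (ψ₁ (β * w) - b * β - b * (β * w) ^ 2) := by
    intro u hu w hw
    have hβw : β * w ∈ 𝔻 := by
      rw [hmem] at hw ⊢; rw [norm_mul, hβ, one_mul]; exact hw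
    have h := H u hu w hw
    rw [hψ₀eq u hu, hψ₀eq (β * w) hβw] at h
    linear_combination h + (u * b * (1 + β * w ^ 2)) * hβ1
  -- symmetry step: G w = conj β * G (β w)
  have Gsym : ∀ w ∈ 𝔻, ψ₁ w - b * β - b * w ^ 2 =
      conj β * (ψ₁ (β * w) - b * β - b * (β * w) ^ 2) := by
    intro w hw
    rcases eq_or_ne w 0 with rfl | hne
    · rw [mul_zero]
      linear_combination (1 - conj β) * hb0
    · have h := key w hw w hw
      have := mul_left_cancel₀ hne (by linear_combination h :
        w * (ψ₁ w - b * β - b * w ^ 2) =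
          w * (conj β * (ψ₁ (β * w) - b * β - b * (β * w) ^ 2)))
      exact this
  have rel : ∀ u ∈ 𝔻, ∀ w ∈ 𝔻,
      w * (ψ₁ u - b * β - b * u ^ 2) = u * (ψ₁ w - b * β - b * w ^ 2) := by
    intro u hu w hw
    rw [Gsym w hw]
    linear_combination key u hu w hw
  have hhalf : (1/2 : ℂ) ∈ 𝔻 := by rw [hmem]; norm_num
  refine ⟨a, b, 2 * (ψ₁ (1/2) - b * β - b * (1/2) ^ 2), fun u hu => ⟨hψ₀eq u hu, ?_⟩⟩
  have h := rel u hu (1/2) hhalf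
  linear_combination 2 * h
end
end

section
/- Suppose ψ₀, ψ₁ are holomorphic on 𝔻 and satisfy, for all z, u ∈ 𝔻: ψ₀(u) + ψ₁(u)·conj(z)/(1 − conj(z)u) = conj(ψ₀(z)) + conj(ψ₁(z))·u/(1 − conj(z)u). Then there exist b ∈ ℂ and a, c ∈ ℝ such that ψ₀(u) = a + bu and ψ₁(u) = conj(b) + cu + bu² for all u ∈ 𝔻. -/
open Complex ComplexConjugate Metric Filter

noncomputable section

/-- if holomorphic `ψ₀, ψ₁` on `𝔻` satisfy
`ψ₀(u) + ψ₁(u)·conj z/(1 − conj(z)u) = conj(ψ₀(z)) + conj(ψ₁(z))·u/(1 − conj(z)u)`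
for all `z, u ∈ 𝔻`, then `ψ₀(u) = a + bu`, `ψ₁(u) = conj b + cu + bu²` with `b ∈ ℂ`, `a, c ∈ ℝ`. -/
theorem stmt9 (ψ₀ ψ₁ : ℂ → ℂ)
    (hψ₀ : DifferentiableOn ℂ ψ₀ 𝔻) (hψ₁ : DifferentiableOn ℂ ψ₁ 𝔻)
    (hid : ∀ z ∈ 𝔻, ∀ u ∈ 𝔻,
      ψ₀ u + ψ₁ u * conj z / (1 - conj z * u) =
        conj (ψ₀ z) + conj (ψ₁ z) * u / (1 - conj z * u)) :
    ∃ (b : ℂ) (a c : ℝ), ∀ u ∈ 𝔻,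
      ψ₀ u = (a : ℂ) + b * u ∧ ψ₁ u = conj b + (c : ℂ) * u + b * u ^ 2 := by
  have h0mem : (0:ℂ) ∈ 𝔻 := by simp [𝔻]
  have hhalf : (1/2 : ℂ) ∈ 𝔻 := by
    simp [𝔻, Metric.mem_ball]
    norm_num
  set b : ℂ := conj (ψ₁ 0) with hb
  have h0 : ∀ u ∈ 𝔻, ψ₀ u = conj (ψ₀ 0) + b * u := by
    intro u hu
    have := hid 0 h0mem u hu
    simpa [hb] using this
  have hA : ψ₀ 0 = conj (ψ₀ 0) := by simpa using h0 0 h0mem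
  have hc12 : conj ((1:ℂ)/2) = 1/2 := by
    simp [map_div₀, map_ofNat]
  set c' : ℂ := 2 * conj (ψ₁ (1/2)) - conj b / 2 - 2 * b with hc'
  have key : ∀ u ∈ 𝔻, ψ₁ u = conj b + c' * u + b * u ^ 2 := by
    intro u hu
    have hu' : ‖u‖ < 1 := by
      simpa [𝔻, mem_ball, dist_eq_norm] using hu
    have hne2 : (2:ℂ) - u ≠ 0 := by
      intro h
      rw [sub_eq_zero] at h
      rw [← h] at hu'
      simp at hu'
    have hne : (1:ℂ) - conj (1/2 : ℂ) * u ≠ 0 := by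
      rw [hc12]
      intro h
      apply hne2
      linear_combination 2 * h
    have E := hid (1/2) hhalf u hu
    rw [hc12] at E
    field_simp [hne2] at E
    have h0u := h0 u hu
    have h12 := h0 (1/2) hhalf
    have hcc : conj (ψ₀ (1/2 : ℂ)) = ψ₀ 0 + conj b * (1/2) := by
      rw [h12]; simp [hb, map_ofNat]
    rw [hc']
    linear_combination E - (2 - u) * h0u + (2 - u) * hcc + (2 - u) * hA
  have key12 := key (1/2) hhalf
  have hcconj : conj c' = 2 * ψ₁ (1/2) - b / 2 - 2 * conj b := by
    rw [hc']; simp [hb, map_ofNat, map_div₀]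
  have hcr : (c'.re : ℂ) = c' := by
    rw [← Complex.conj_eq_iff_re]
    rw [hcconj]
    linear_combination 2 * key12
  have hr : ((ψ₀ 0).re : ℂ) = ψ₀ 0 := by
    rw [← Complex.conj_eq_iff_re]
    exact hA.symm
  refine ⟨b, (ψ₀ 0).re, c'.re, ?_⟩
  intro u hu
  refine ⟨?_, ?_⟩
  · rw [h0 u hu, ← hA, hr]
  · rw [key u hu, hcr]
end
end

section
/- Let β be unimodular, λ ∈ 𝔻\{0}, κ(z) = √(1−|λ|²)/(1−z·conj(λ)), φ(z) = (conj(λ)/λ)·(λ−z)/(1−z·conj(λ)), and J_{β,λ}f(z) = β·κ(z)·conj(f(conj(φ(z)))). Then for every z ∈ 𝔻: (1) J_{β,λ}K_z = β·κ(z)·K_{conj(φ(z))}, and (2) J_{β,λ}K_z^{[1]} = β·κ'(z)·K_{conj(φ(z))} + β·κ(z)·φ'(z)·K_{conj(φ(z))}^{[1]}. -/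
open Complex ComplexConjugate Metric Filter

noncomputable section

/-- The weight `κ(z) = √(1−|λ|²)/(1−z·conj λ)`. -/
def kappa (l : ℂ) (z : ℂ) : ℂ := (Real.sqrt (1 - ‖l‖ ^ 2) : ℂ) / (1 - z * conj l)

/-- The disk automorphism `φ(z) = (conj λ/λ)·(λ−z)/(1−z·conj λ)`. -/
def phi (l : ℂ) (z : ℂ) : ℂ := (conj l / l) * ((l - z) / (1 - z * conj l))

/-- The weighted composition conjugation `J_{β,λ}` on `H²`, described through its action
on the represented functions. -/
def IsJ (beta l : ℂ) (J : H2 → H2) : Prop :=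
  ∀ f : H2, ∀ z ∈ 𝔻, H2.toFun (J f) z = beta * kappa l z * conj (H2.toFun f (conj (phi l z)))

open scoped NNReal ENNReal

namespace Stmt13Aux

lemma summable_toFun (f : H2) {z : ℂ} (hz : ‖z‖ < 1) : Summable (fun n => f n * z ^ n) := by
  apply Summable.of_norm_bounded (g := fun n => ‖f‖ * ‖z‖ ^ n)
    ((summable_geometric_of_lt_one (norm_nonneg z) hz).mul_left _)
  intro n
  rw [norm_mul, norm_pow]
  gcongr
  exact lp.norm_apply_le_norm (by norm_num) f n

def fps (f : H2) : FormalMultilinearSeries ℂ ℂ ℂ := fun n =>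
  ContinuousMultilinearMap.mkPiRing ℂ (Fin n) (f n)

lemma hasFPS (f : H2) : HasFPowerSeriesOnBall (H2.toFun f) (fps f) 0 (1/2) := by
  constructor
  · have : ((1/2 : ℝ≥0) : ℝ≥0∞) ≤ (fps f).radius := by
      apply FormalMultilinearSeries.le_radius_of_bound _ ‖f‖
      intro n
      rw [fps, ContinuousMultilinearMap.norm_mkPiRing]
      calc ‖f n‖ * ((1/2 : ℝ≥0) : ℝ) ^ n ≤ ‖f‖ * 1 ^ n := by
            gcongr
            · exact lp.norm_apply_le_norm (by norm_num) f n
            · norm_num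
        _ = ‖f‖ := by simp
    simpa using this
  · norm_num
  · intro y hy
    have hy1 : ‖y‖ < 1 := by
      rw [EMetric.mem_ball, edist_zero_right] at hy
      have h1 : (‖y‖₊ : ℝ≥0∞) < 1 := lt_of_lt_of_le hy (by norm_num)
      rw [ENNReal.coe_lt_one_iff] at h1
      exact_mod_cast h1
    have : (fun n : ℕ => fps f n fun _ : Fin n => y) = fun n => f n * y ^ n := by
      funext n
      simp [fps, ContinuousMultilinearMap.mkPiRing_apply, smul_eq_mul, mul_comm]
    rw [this, zero_add]
    exact (summable_toFun f hy1).hasSum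

lemma toFun_ext {f g : H2} (h : ∀ z ∈ 𝔻, H2.toFun f z = H2.toFun g z) : f = g := by
  have hfg : fps f = fps g := by
    apply HasFPowerSeriesAt.eq_formalMultilinearSeries_of_eventually
      (hasFPS f).hasFPowerSeriesAt (hasFPS g).hasFPowerSeriesAt
    filter_upwards [Metric.ball_mem_nhds (0:ℂ) one_pos] with w hw
    exact h w hw
  apply lp.ext
  funext n
  have h1 := congrFun hfg n
  have h2 := congrArg (fun (m : ContinuousMultilinearMap ℂ (fun _ : Fin n => ℂ) ℂ) =>
    m (fun _ => 1)) h1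
  simpa [fps, ContinuousMultilinearMap.mkPiRing_apply] using h2

lemma toFun_smul (c : ℂ) (f : H2) (z : ℂ) : H2.toFun (c • f) z = c * H2.toFun f z := by
  unfold H2.toFun
  rw [← tsum_mul_left]
  apply tsum_congr
  intro n
  rw [lp.coeFn_smul]
  simp [mul_assoc]

lemma toFun_add (f g : H2) {z : ℂ} (hz : ‖z‖ < 1) :
    H2.toFun (f + g) z = H2.toFun f z + H2.toFun g z := by
  unfold H2.toFun
  rw [← Summable.tsum_add (summable_toFun f hz) (summable_toFun g hz)]
  apply tsum_congr
  intro n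
  rw [lp.coeFn_add]
  simp [add_mul]

end Stmt13Aux

namespace Stmt13Aux

lemma one_sub_ne {a b : ℂ} (ha : ‖a‖ < 1) (hb : ‖b‖ < 1) : 1 - a * b ≠ 0 := by
  intro h
  rw [sub_eq_zero] at h
  have : ‖a * b‖ < 1 := by
    rw [norm_mul]
    nlinarith [norm_nonneg a, norm_nonneg b]
  rw [← h] at this
  simp at this

lemma D_ne {l z : ℂ} (hl : ‖l‖ < 1) (hz : ‖z‖ < 1) : 1 - z * conj l ≠ 0 :=
  one_sub_ne hz (by rwa [RCLike.norm_conj])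

lemma normSq_key (l z : ℂ) : Complex.normSq (1 - z * conj l) - Complex.normSq (l - z)
    = (1 - Complex.normSq l) * (1 - Complex.normSq z) := by
  simp only [Complex.normSq_apply, Complex.sub_re, Complex.sub_im, Complex.mul_re,
    Complex.mul_im, Complex.conj_re, Complex.conj_im, Complex.one_re, Complex.one_im]
  ring

lemma phi_mem {l : ℂ} (hl : ‖l‖ < 1) (hl0 : l ≠ 0) {z : ℂ} (hz : ‖z‖ < 1) :
    ‖phi l z‖ < 1 := by
  have hD := D_ne hl hz
  have h1 : Complex.normSq l < 1 := by
    rw [← Complex.sq_norm] at *; nlinarith [norm_nonneg l]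
  have h2 : Complex.normSq z < 1 := by
    rw [← Complex.sq_norm] at *; nlinarith [norm_nonneg z]
  have key := normSq_key l z
  have hlt : Complex.normSq (l - z) < Complex.normSq (1 - z * conj l) := by nlinarith
  have hnorm : ‖l - z‖ < ‖1 - z * conj l‖ := by
    rw [Complex.norm_def, Complex.norm_def]
    exact Real.sqrt_lt_sqrt (Complex.normSq_nonneg _) hlt
  have hDpos : (0:ℝ) < ‖1 - z * conj l‖ := lt_of_le_of_lt (norm_nonneg _) hnorm
  rw [phi, norm_mul, norm_div, norm_div, RCLike.norm_conj, div_self (norm_ne_zero_iff.mpr hl0),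
    one_mul, div_lt_one hDpos]
  exact hnorm

lemma deriv_kappa {l z : ℂ} (h : 1 - z * conj l ≠ 0) :
    deriv (kappa l) z = (Real.sqrt (1 - ‖l‖^2) : ℂ) * conj l / (1 - z * conj l)^2 := by
  have h1 : HasDerivAt (fun w : ℂ => 1 - w * conj l) (-(conj l)) z := by
    simpa using ((hasDerivAt_id z).mul_const (conj l)).const_sub 1
  have h2 := (hasDerivAt_const z ((Real.sqrt (1 - ‖l‖^2) : ℝ) : ℂ)).div h1 h
  have h3 : deriv (kappa l) z =
      (0 * (1 - z * conj l) - ((Real.sqrt (1 - ‖l‖^2) : ℝ) : ℂ) * -(conj l)) /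
        (1 - z * conj l)^2 := by
    exact h2.deriv
  rw [h3]
  ring

lemma deriv_phi {l z : ℂ} (h : 1 - z * conj l ≠ 0) (hl0 : l ≠ 0) :
    deriv (phi l) z = (conj l / l) * ((l * conj l - 1) / (1 - z * conj l)^2) := by
  have h1 : HasDerivAt (fun w : ℂ => 1 - w * conj l) (-(conj l)) z := by
    simpa using ((hasDerivAt_id z).mul_const (conj l)).const_sub 1
  have h0 : HasDerivAt (fun w : ℂ => l - w) (-1) z := by
    simpa using (hasDerivAt_id z).const_sub l
  have h2 := ((h0.div h1 h).const_mul (conj l / l))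
  have h3 : deriv (phi l) z = (conj l / l) *
      ((-1 * (1 - z * conj l) - (l - z) * -(conj l)) / (1 - z * conj l)^2) := h2.deriv
  rw [h3]
  have : -1 * (1 - z * conj l) - (l - z) * -(conj l) = l * conj l - 1 := by ring
  rw [this]

end Stmt13Aux

set_option maxHeartbeats 2000000 in
lemma key2 (b S l a z u : ℂ) (hl : l ≠ 0) (hDu : 1 - u*a ≠ 0) (hDz : 1 - z*a ≠ 0)
    (hN : l - l*u*a - l*z*a + z*a*u ≠ 0) :
    b * (S / (1-u*a)) * (a / l * ((l-u)/(1-u*a)) / ((l - l*u*a - l*z*a + z*a*u) / (l*(1-u*a)))^2)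
    = b * (S*a/(1-z*a)^2) * (1 / ((l - l*u*a - l*z*a + z*a*u) / (l*(1-z*a))))
    + b * (S/(1-z*a)) * (a/l * ((l*a-1)/(1-z*a)^2)) *
        (u / ((l - l*u*a - l*z*a + z*a*u)/(l*(1-z*a)))^2) := by
  generalize hng : l - l*u*a - l*z*a + z*a*u = n at hN ⊢
  generalize hc : 1 - u*a = c at hDu ⊢
  generalize hd : 1 - z*a = d at hDz ⊢
  have hrel : (l - u) * d = n + (l*a - 1)*u := by rw [← hng, ← hd]; ring
  trans b*S*a*l*(l-u)/n^2
  · simp only [div_pow, one_div_div, div_div_eq_mul_div]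
    field_simp
  · have t1 : b * (S*a/d^2) * (1 / (n/(l*d))) = b*S*a*l/(d*n) := by
      field_simp
    have t2 : b * (S/d) * (a/l * ((l*a-1)/d^2)) * (u / (n/(l*d))^2)
        = b*S*a*(l*a-1)*u*l/(d*n^2) := by
      rw [div_pow, div_div_eq_mul_div]
      rw [show b * (S / d) * (a / l * ((l * a - 1) / d ^ 2)) * (u * (l * d) ^ 2 / n ^ 2)
          = (b * S * (a * ((l * a - 1))) * (u * (l * d) ^ 2)) / (d * (l * d ^ 2) * n ^ 2) by
        simp only [div_mul_div_comm, mul_div_assoc', div_div]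
        ring_nf]
      rw [div_eq_div_iff (by simp [hDz, hN, hl]) (by simp [hDz, hN])]
      ring
    rw [t1, t2, div_add_div _ _ (mul_ne_zero hDz hN) (mul_ne_zero hDz (pow_ne_zero 2 hN)),
      div_eq_div_iff (pow_ne_zero 2 hN)
        (mul_ne_zero (mul_ne_zero hDz hN) (mul_ne_zero hDz (pow_ne_zero 2 hN)))]
    linear_combination (b*S*a*l*d*n^3) * hrel

namespace Stmt13Aux

lemma mem_D {w : ℂ} : w ∈ 𝔻 ↔ ‖w‖ < 1 := by
  simp [𝔻, mem_ball_zero_iff]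

lemma rep1 {l : ℂ} (hl0 : l ≠ 0) {u : ℂ} (hDu : 1 - u * conj l ≠ 0) (z : ℂ) :
    1 - z * phi l u =
      (l - l * u * conj l - l * z * conj l + z * conj l * u) / (l * (1 - u * conj l)) := by
  have hDu' : 1 - conj l * u ≠ 0 := by rwa [mul_comm]
  rw [phi]
  field_simp
  ring

lemma rep2 {l : ℂ} (hl0 : l ≠ 0) {z : ℂ} (hDz : 1 - z * conj l ≠ 0) (u : ℂ) :
    1 - phi l z * u =
      (l - l * u * conj l - l * z * conj l + z * conj l * u) / (l * (1 - z * conj l)) := by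
  have hDz' : 1 - conj l * z ≠ 0 := by rwa [mul_comm]
  rw [phi]
  field_simp
  ring

end Stmt13Aux

set_option maxHeartbeats 2000000 in
open Stmt13Aux in
/-- the conjugation `J_{β,λ}` acts on kernels by
`J K_z = β·κ(z)·K_{conj φ(z)}` and
`J K_z^{[1]} = β·κ′(z)·K_{conj φ(z)} + β·κ(z)·φ′(z)·K_{conj φ(z)}^{[1]}`. -/
theorem stmt13 (beta l : ℂ) (hβ : ‖beta‖ = 1) (hl : l ∈ 𝔻) (hl0 : l ≠ 0)
    (J : H2 → H2) (hJ : IsJ beta l J) :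
    ∀ z ∈ 𝔻, ∀ K K1 Kp Kp1 : H2,
      (∀ u ∈ 𝔻, H2.toFun K u = 1 / (1 - conj z * u)) →
      (∀ u ∈ 𝔻, H2.toFun K1 u = u / (1 - conj z * u) ^ 2) →
      (∀ u ∈ 𝔻, H2.toFun Kp u = 1 / (1 - conj (conj (phi l z)) * u)) →
      (∀ u ∈ 𝔻, H2.toFun Kp1 u = u / (1 - conj (conj (phi l z)) * u) ^ 2) →
      J K = (beta * kappa l z) • Kp ∧
        J K1 = (beta * deriv (kappa l) z) • Kp +
          (beta * kappa l z * deriv (phi l) z) • Kp1 := by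
  intro z hz K K1 Kp Kp1 hK hK1 hKp hKp1
  have hl1 : ‖l‖ < 1 := mem_D.mp hl
  have hz1 : ‖z‖ < 1 := mem_D.mp hz
  have hDz : 1 - z * conj l ≠ 0 := D_ne hl1 hz1
  constructor
  · apply toFun_ext
    intro u hu
    have hu1 : ‖u‖ < 1 := mem_D.mp hu
    have hDu : 1 - u * conj l ≠ 0 := D_ne hl1 hu1
    have hφu : ‖phi l u‖ < 1 := phi_mem hl1 hl0 hu1
    have hmem : conj (phi l u) ∈ 𝔻 := by rw [mem_D, RCLike.norm_conj]; exact hφu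
    have hNe : 1 - z * phi l u ≠ 0 := one_sub_ne hz1 hφu
    have hN : l - l * u * conj l - l * z * conj l + z * conj l * u ≠ 0 := by
      intro h0
      apply hNe
      rw [rep1 hl0 hDu z, h0, zero_div]
    rw [hJ K u hu, hK _ hmem, toFun_smul, hKp u hu]
    simp only [map_div₀, map_one, map_sub, map_mul, Complex.conj_conj]
    simp only [kappa]
    rw [rep1 hl0 hDu z, rep2 hl0 hDz u]
    have hN' : l - l * u * conj l - l * conj l * z + u * conj l * z ≠ 0 := by
      convert hN using 1; ring
    have hDu' : 1 - conj l * u ≠ 0 := by rwa [mul_comm]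
    have hDz' : 1 - conj l * z ≠ 0 := by rwa [mul_comm]
    field_simp
  · apply toFun_ext
    intro u hu
    have hu1 : ‖u‖ < 1 := mem_D.mp hu
    have hDu : 1 - u * conj l ≠ 0 := D_ne hl1 hu1
    have hφu : ‖phi l u‖ < 1 := phi_mem hl1 hl0 hu1
    have hmem : conj (phi l u) ∈ 𝔻 := by rw [mem_D, RCLike.norm_conj]; exact hφu
    have hNe : 1 - z * phi l u ≠ 0 := one_sub_ne hz1 hφu
    have hN : l - l * u * conj l - l * z * conj l + z * conj l * u ≠ 0 := by
      intro h0
      apply hNe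
      rw [rep1 hl0 hDu z, h0, zero_div]
    rw [hJ K1 u hu, hK1 _ hmem, toFun_add _ _ hu1, toFun_smul, toFun_smul,
      hKp u hu, hKp1 u hu, deriv_kappa hDz, deriv_phi hDz hl0]
    simp only [map_div₀, map_one, map_sub, map_mul, map_pow, Complex.conj_conj]
    simp only [kappa]
    rw [rep1 hl0 hDu z, rep2 hl0 hDz u, phi]
    exact key2 beta _ l (conj l) z u hl0 hDu hDz hN
end
end

section
/- Let β be unimodular, λ ∈ 𝔻\{0}, and J_{β,λ} the conjugation J_{β,λ}f(z) = β·κ(z)·conj(f(conj φ(z))) with κ(z) = √(1−|λ|²)/(1−z conj λ), φ(z) = (conj λ/λ)(λ−z)/(1−z conj λ). For holomorphic ψ₀, ψ₁ on 𝔻, the formal identity J_{β,λ} E(ψ₀,ψ₁) J_{β,λ} = E(ψ₀^⊙, ψ₁^⊙) holds, where ψ₀^⊙(z) = conj(ψ₀(conj φ(z))) + λ(1 − z·conj λ)·conj(ψ₁(conj φ(z)))/(1 − |λ|²) and ψ₁^⊙(z) = −λ(1 − z·conj λ)²·conj(ψ₁(conj φ(z)))/(conj(λ)(1 − |λ|²)).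 -/
open Complex ComplexConjugate Metric Filter

noncomputable section

/-- `J_{β,λ}` acting formally on functions. -/
def Jfun (beta l : ℂ) (G : ℂ → ℂ) : ℂ → ℂ := fun z => beta * kappa l z * conj (G (conj (phi l z)))

open Topology in
lemma hasDerivAt_conj_comp {f : ℂ → ℂ} {c : ℂ} (u : ℂ)
    (hf : HasDerivAt f c (conj u)) :
    HasDerivAt (fun x => conj (f (conj x))) (conj c) u := by
  rw [hasDerivAt_iff_isLittleO] at hf ⊢
  have hc : Tendsto (fun x : ℂ => (starRingEnd ℂ) x) (𝓝 u) (𝓝 (conj u)) :=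
    (Complex.continuous_conj).tendsto u
  have h := hf.comp_tendsto hc
  rw [Asymptotics.isLittleO_iff] at h ⊢
  intro ε hε
  filter_upwards [h hε] with x hx
  have e : (starRingEnd ℂ) (f (conj x) - f (conj u) - (conj x - conj u) • c)
      = conj (f (conj x)) - conj (f (conj u)) - (x - u) • conj c := by
    simp [smul_eq_mul, map_sub, map_mul]
  calc ‖conj (f (conj x)) - conj (f (conj u)) - (x - u) • conj c‖
      = ‖f (conj x) - f (conj u) - (conj x - conj u) • c‖ := by
        rw [← e, RCLike.norm_conj]
    _ ≤ ε * ‖conj x - conj u‖ := hx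
    _ = ε * ‖x - u‖ := by rw [← map_sub, RCLike.norm_conj]

lemma hasDerivAt_kappa (l u : ℂ) (h : 1 - u * conj l ≠ 0) :
    HasDerivAt (kappa l)
      ((Real.sqrt (1 - ‖l‖ ^ 2) : ℂ) * conj l / (1 - u * conj l) ^ 2) u := by
  have hden : HasDerivAt (fun x : ℂ => 1 - x * conj l) (-(conj l)) u := by
    simpa using ((hasDerivAt_id u).mul_const (conj l)).const_sub 1
  have h2 := (hasDerivAt_const u ((Real.sqrt (1 - ‖l‖ ^ 2) : ℂ))).div hden h
  unfold kappa
  exact h2.congr_deriv (by ring)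

lemma hasDerivAt_phi (l u : ℂ) (h : 1 - u * conj l ≠ 0) :
    HasDerivAt (phi l)
      ((conj l / l) * ((l * conj l - 1) / (1 - u * conj l) ^ 2)) u := by
  have hnum : HasDerivAt (fun x : ℂ => l - x) (-1) u := by
    simpa using (hasDerivAt_id u).const_sub l
  have hden : HasDerivAt (fun x : ℂ => 1 - x * conj l) (-(conj l)) u := by
    simpa using ((hasDerivAt_id u).mul_const (conj l)).const_sub 1
  have h2 := (hnum.div hden h).const_mul (conj l / l)
  unfold phi
  exact h2.congr_deriv (by field_simp; ring)

set_option maxHeartbeats 1000000 in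
/-- the formal identity `J_{β,λ} E(ψ₀,ψ₁) J_{β,λ} = E(ψ₀^⊙, ψ₁^⊙)` with
`ψ₀^⊙(z) = conj(ψ₀(conj φ(z))) + λ(1 − z·conj λ)·conj(ψ₁(conj φ(z)))/(1 − |λ|²)` and
`ψ₁^⊙(z) = −λ(1 − z·conj λ)²·conj(ψ₁(conj φ(z)))/(conj λ·(1 − |λ|²))`. -/
theorem stmt14 (beta l : ℂ) (hβ : ‖beta‖ = 1) (hl : l ∈ 𝔻) (hl0 : l ≠ 0)
    (ψ₀ ψ₁ F : ℂ → ℂ)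
    (hψ₀ : DifferentiableOn ℂ ψ₀ 𝔻) (hψ₁ : DifferentiableOn ℂ ψ₁ 𝔻)
    (hF : DifferentiableOn ℂ F 𝔻) :
    ∀ z ∈ 𝔻,
      Jfun beta l (fun w => ψ₀ w * Jfun beta l F w + ψ₁ w * deriv (Jfun beta l F) w) z =
        (conj (ψ₀ (conj (phi l z))) +
            l * (1 - z * conj l) * conj (ψ₁ (conj (phi l z))) / (1 - (‖l‖ : ℂ) ^ 2)) * F z +
          (-(l * (1 - z * conj l) ^ 2 * conj (ψ₁ (conj (phi l z)))) /
              (conj l * (1 - (‖l‖ : ℂ) ^ 2))) * deriv F z := by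
  
  have hl1 : ‖l‖ < 1 := by simpa [𝔻] using hl
  have hcl : conj l ≠ 0 := by simpa using hl0
  intro z hz
  have hz1 : ‖z‖ < 1 := by simpa [𝔻] using hz
  set s : ℂ := (Real.sqrt (1 - ‖l‖ ^ 2) : ℂ) with hs
  have hcs : conj s = s := Complex.conj_ofReal _
  have hnorm : ((‖l‖ : ℂ)) ^ 2 = l * conj l := by
    rw [Complex.mul_conj]
    norm_cast
    rw [Complex.normSq_eq_norm_sq]
  have hs2 : s ^ 2 = 1 - l * conj l := by
    have h0 : (0:ℝ) ≤ 1 - ‖l‖ ^ 2 := by nlinarith [norm_nonneg l]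
    have h1 : s ^ 2 = ((1 - ‖l‖ ^ 2 : ℝ) : ℂ) := by
      rw [hs]; norm_cast; exact Real.sq_sqrt h0
    rw [h1, ← hnorm]; push_cast; ring
  have hs0 : s ≠ 0 := by
    rw [hs]
    simp only [ne_eq, Complex.ofReal_eq_zero]
    have : 0 < Real.sqrt (1 - ‖l‖ ^ 2) := Real.sqrt_pos.mpr (by nlinarith [norm_nonneg l])
    exact ne_of_gt this
  have hone : (1 : ℂ) - l * conj l ≠ 0 := by rw [← hs2]; exact pow_ne_zero 2 hs0
  have hd1 : (1 : ℂ) - z * conj l ≠ 0 := by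
    intro h
    have h1 : (1:ℂ) = z * conj l := by linear_combination h
    have h2 : ‖z * conj l‖ < 1 := by
      rw [norm_mul, RCLike.norm_conj]
      nlinarith [norm_nonneg z, norm_nonneg l]
    rw [← h1] at h2; simp at h2
  set w : ℂ := conj (phi l z) with hw
  have hcw : conj w = phi l z := Complex.conj_conj _
  have hphi1 : 1 - phi l z * l = (1 - l * conj l) / (1 - z * conj l) := by
    rw [phi]
    linear_combination (-(conj l) * (l - z) * (1 - z * conj l)⁻¹) * (mul_inv_cancel₀ hl0) + (-1) * (mul_inv_cancel₀ hd1)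
  have hd3 : 1 - phi l z * l ≠ 0 := hphi1 ▸ div_ne_zero hone hd1
  have hd2 : (1 : ℂ) - w * conj l ≠ 0 := by
    intro h
    have h2 : conj ((1:ℂ) - w * conj l) = 0 := by rw [h]; simp
    rw [map_sub, map_mul, hcw, Complex.conj_conj, map_one] at h2
    exact hd3 (by linear_combination h2)
  have hzphi : conj (phi l w) = z := by
    have hnum : conj l - phi l z = conj l * z * (1 - l * conj l) / (l * (1 - z * conj l)) := by
      rw [phi, ← div_div]
      linear_combination (-(conj l) * (1 - z * conj l)⁻¹ * (1 - z * conj l)) * (mul_inv_cancel₀ hl0) + (-(conj l)) * (mul_inv_cancel₀ hd1)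
    rw [phi]
    simp only [map_mul, map_div₀, map_sub, map_one, Complex.conj_conj]
    rw [hcw, hnum, hphi1]
    field_simp
    linear_combination z * (mul_inv_cancel₀ hd1)
  have hbb : beta * conj beta = 1 := by
    rw [Complex.mul_conj]
    norm_cast
    rw [Complex.normSq_eq_norm_sq, hβ]; norm_num
  have hphi1' : 1 - phi l z * l = s ^ 2 / (1 - z * conj l) := by rw [hphi1, ← hs2]
  -- differentiability of F at z
  have hFz : HasDerivAt F (deriv F z) z := by
    have hop : IsOpen 𝔻 := Metric.isOpen_ball
    exact (hF.differentiableAt (hop.mem_nhds hz)).hasDerivAt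
  have hg : HasDerivAt (fun x => conj (F (conj x))) (conj (deriv F z)) (phi l w) := by
    apply hasDerivAt_conj_comp
    rw [hzphi]; exact hFz
  have hcomp : HasDerivAt (fun u => conj (F (conj (phi l u))))
      (conj (deriv F z) * ((conj l / l) * ((l * conj l - 1) / (1 - w * conj l) ^ 2))) w := by
    have := hg.comp w (hasDerivAt_phi l w hd2)
    exact this
  have heq : Jfun beta l F = fun u => beta * (kappa l u * conj (F (conj (phi l u)))) := by
    funext u; simp only [Jfun]; ring
  have hJd : deriv (Jfun beta l F) w
      = beta * (s * conj l / (1 - w * conj l) ^ 2 * conj (F z)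
          + kappa l w * (conj (deriv F z) * ((conj l / l) * ((-(s ^ 2)) / (1 - w * conj l) ^ 2)))) := by
    have h := ((hasDerivAt_kappa l w hd2).mul hcomp).const_mul beta
    rw [heq, (show HasDerivAt (fun u => beta * (kappa l u * conj (F (conj (phi l u))))) _ w from h).deriv, hzphi]
    linear_combination (beta * kappa l w * conj (deriv F z) * (conj l / l) / (1 - w * conj l) ^ 2) * hs2
  have hL : Jfun beta l (fun u => ψ₀ u * Jfun beta l F u + ψ₁ u * deriv (Jfun beta l F) u) z
      = beta * kappa l z * conj (ψ₀ w * Jfun beta l F w + ψ₁ w * deriv (Jfun beta l F) w) := rfl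
  have hJw : Jfun beta l F w = beta * kappa l w * conj (F z) := by
    simp only [Jfun]; rw [hzphi]
  have hfactor : ψ₀ w * Jfun beta l F w + ψ₁ w * deriv (Jfun beta l F) w
      = beta * (ψ₀ w * (kappa l w * conj (F z))
          + ψ₁ w * (s * conj l / (1 - w * conj l) ^ 2 * conj (F z)
              + kappa l w * (conj (deriv F z) * ((conj l / l) * ((-(s ^ 2)) / (1 - w * conj l) ^ 2))))) := by
    rw [hJw, hJd]; ring
  rw [hL, hfactor, map_mul]
  rw [show beta * kappa l z * (conj beta * conj (ψ₀ w * (kappa l w * conj (F z))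
          + ψ₁ w * (s * conj l / (1 - w * conj l) ^ 2 * conj (F z)
              + kappa l w * (conj (deriv F z) * ((conj l / l) * ((-(s ^ 2)) / (1 - w * conj l) ^ 2))))))
      = (beta * conj beta) * (kappa l z * conj (ψ₀ w * (kappa l w * conj (F z))
          + ψ₁ w * (s * conj l / (1 - w * conj l) ^ 2 * conj (F z)
              + kappa l w * (conj (deriv F z) * ((conj l / l) * ((-(s ^ 2)) / (1 - w * conj l) ^ 2)))))) from by ring,
    hbb, one_mul, hnorm]
  simp only [← hs2]
  simp only [kappa, map_add, map_mul, map_div₀, map_pow, map_neg, map_sub, map_one,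
    Complex.conj_conj, hcs, hcw, Complex.conj_ofReal]
  simp only [hphi1', ← hs]
  simp only [div_pow, div_div_eq_mul_div]
  have r1 : s * s⁻¹ = 1 := mul_inv_cancel₀ hs0
  have r2 : (1 - z * conj l) * (1 - z * conj l)⁻¹ = 1 := mul_inv_cancel₀ hd1
  have r3 : conj l * (conj l)⁻¹ = 1 := mul_inv_cancel₀ hcl
  linear_combination (1 * (1 - z * conj l)⁻¹ * (starRingEnd ℂ) (ψ₀ w) * F z + (-1) * (1 - z * conj l)⁻¹ * z * conj l * (starRingEnd ℂ) (ψ₀ w) * F z + 1 * s⁻¹ ^ 2 * (1 - z * conj l)⁻¹ * l * (starRingEnd ℂ) (ψ₁ w) * F z + (-2) * s⁻¹ ^ 2 * (1 - z * conj l)⁻¹ * z * conj l * l * (starRingEnd ℂ) (ψ₁ w) * F z + 1 * s⁻¹ ^ 2 * (1 - z * conj l)⁻¹ * z ^ 2 * conj l ^ 2 * l * (starRingEnd ℂ) (ψ₁ w) * F z + (-1) * s⁻¹ ^ 2 * (1 - z * conj l)⁻¹ * (conj l)⁻¹ * l * (starRingEnd ℂ) (ψ₁ w) * deriv F z + 3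 * s⁻¹ ^ 2 * (1 - z * conj l)⁻¹ * (conj l)⁻¹ * z * conj l * l * (starRingEnd ℂ) (ψ₁ w) * deriv F z + (-3) * s⁻¹ ^ 2 * (1 - z * conj l)⁻¹ * (conj l)⁻¹ * z ^ 2 * conj l ^ 2 * l * (starRingEnd ℂ) (ψ₁ w) * deriv F z + 1 * s⁻¹ ^ 2 * (1 - z * conj l)⁻¹ * (conj l)⁻¹ * z ^ 3 * conj l ^ 3 * l * (starRingEnd ℂ) (ψ₁ w) * deriv F z + 1 * s * s⁻¹ * (1 - z * conj l)⁻¹ * (starRingEnd ℂ) (ψ₀ w) * F z + (-1) * s * s⁻¹ * (1 - z * conj l)⁻¹ * z * conj l * (starRingEnd ℂ) (ψ₀ w) * F z + 1 * s * s⁻¹ ^ 3 * (1 - z * conj l)⁻¹ * l * (starRingEnd ℂ) (ψ₁ w) * F z + (-2) * s * s⁻¹ ^ 3 * (1 - z * conj l)⁻¹ * z * conj l * l * (starRingEnd ℂ) (ψ₁ w) * F z + 1 * s * s⁻¹ ^ 3 * (1 - z * conj l)⁻¹ * z ^ 2 * conj l ^ 2 * l * (starRingEnd ℂ) (ψ₁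 w) * F z + (-1) * s * s⁻¹ ^ 3 * (1 - z * conj l)⁻¹ * (conj l)⁻¹ * l * (starRingEnd ℂ) (ψ₁ w) * deriv F z + 3 * s * s⁻¹ ^ 3 * (1 - z * conj l)⁻¹ * (conj l)⁻¹ * z * conj l * l * (starRingEnd ℂ) (ψ₁ w) * deriv F z + (-3) * s * s⁻¹ ^ 3 * (1 - z * conj l)⁻¹ * (conj l)⁻¹ * z ^ 2 * conj l ^ 2 * l * (starRingEnd ℂ) (ψ₁ w) * deriv F z + 1 * s * s⁻¹ ^ 3 * (1 - z * conj l)⁻¹ * (conj l)⁻¹ * z ^ 3 * conj l ^ 3 * l * (starRingEnd ℂ) (ψ₁ w) * deriv F z + (-1) * s ^ 2 * s⁻¹ ^ 4 * (1 - z * conj l)⁻¹ * (conj l)⁻¹ * l * (starRingEnd ℂ) (ψ₁ w) * deriv F z + 3 * s ^ 2 * s⁻¹ ^ 4 * (1 - z * conj l)⁻¹ * (conj l)⁻¹ * z * conj l * l * (starRingEnd ℂ) (ψ₁ w) * deriv F z + (-3) * s ^ 2 * s⁻¹ ^ 4 * (1 - z * conj l)⁻¹ * (conj l)⁻¹ *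 z ^ 2 * conj l ^ 2 * l * (starRingEnd ℂ) (ψ₁ w) * deriv F z + 1 * s ^ 2 * s⁻¹ ^ 4 * (1 - z * conj l)⁻¹ * (conj l)⁻¹ * z ^ 3 * conj l ^ 3 * l * (starRingEnd ℂ) (ψ₁ w) * deriv F z + (-1) * s ^ 3 * s⁻¹ ^ 5 * (1 - z * conj l)⁻¹ * (conj l)⁻¹ * l * (starRingEnd ℂ) (ψ₁ w) * deriv F z + 3 * s ^ 3 * s⁻¹ ^ 5 * (1 - z * conj l)⁻¹ * (conj l)⁻¹ * z * conj l * l * (starRingEnd ℂ) (ψ₁ w) * deriv F z + (-3) * s ^ 3 * s⁻¹ ^ 5 * (1 - z * conj l)⁻¹ * (conj l)⁻¹ * z ^ 2 * conj l ^ 2 * l * (starRingEnd ℂ) (ψ₁ w) * deriv F z + 1 * s ^ 3 * s⁻¹ ^ 5 * (1 - z * conj l)⁻¹ * (conj l)⁻¹ * z ^ 3 * conj l ^ 3 * l * (starRingEnd ℂ) (ψ₁ w) * deriv F z) * r1 + ((-2) * s⁻¹ ^ 2 * z * l * (starRingEnd ℂ) (ψ₁ w) * deriv F z + 1 * s⁻¹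 ^ 2 * z ^ 2 * conj l * l * (starRingEnd ℂ) (ψ₁ w) * deriv F z + 2 * s⁻¹ ^ 2 * (1 - z * conj l)⁻¹ * z * l * (starRingEnd ℂ) (ψ₁ w) * deriv F z + (-3) * s⁻¹ ^ 2 * (1 - z * conj l)⁻¹ * z ^ 2 * conj l * l * (starRingEnd ℂ) (ψ₁ w) * deriv F z + 1 * s⁻¹ ^ 2 * (1 - z * conj l)⁻¹ * z ^ 3 * conj l ^ 2 * l * (starRingEnd ℂ) (ψ₁ w) * deriv F z) * r3 + (1 * (starRingEnd ℂ) (ψ₀ w) * F z + 1 * s⁻¹ ^ 2 * l * (starRingEnd ℂ) (ψ₁ w) * F z + 2 * s⁻¹ ^ 2 * z * l * (starRingEnd ℂ) (ψ₁ w) * deriv F z + (-1) * s⁻¹ ^ 2 * z * conj l * l * (starRingEnd ℂ) (ψ₁ w) * F z + (-1) * s⁻¹ ^ 2 * z ^ 2 * conj l * l * (starRingEnd ℂ) (ψ₁ w) * deriv F z + (-1) * s⁻¹ ^ 2 * (conj l)⁻¹ * l * (starRingEnd ℂ) (ψ₁ w) * deriv F z) * r2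
end
end

section
/- Suppose ψ₀, ψ₁ are holomorphic on 𝔻, β unimodular, λ ∈ 𝔻\{0}, and the identity ψ₀(u)/(1−u conj z) + ψ₁(u)·conj(z)/(1−u conj z)² = conj(β κ(z))·[ψ₀(conj φ(z))·(J_{β,λ}K_{conj φ(z)})(u) + ψ₁(conj φ(z))·(J_{β,λ}K_{conj φ(z)}^{[1]})(u)] holds for all z, u ∈ 𝔻. Then ψ₀(u) = a + bu and ψ₁(u) = d + cu + bu² where a, b, c ∈ ℂ and d = −λb/conj(λ) − λc. -/
open Complex ComplexConjugate Metric Filter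

noncomputable section

set_option maxHeartbeats 1000000 in
/-- if holomorphic `ψ₀, ψ₁` satisfy the kernel identity coming from
`ℰ_max K_z = J_{β,λ} ℰ_max* J_{β,λ} K_z`, then `ψ₀(u) = a + bu`, `ψ₁(u) = d + cu + bu²`
with `d = −λb/conj λ − λc`. -/
theorem stmt15 (beta l : ℂ) (hβ : ‖beta‖ = 1) (hl : l ∈ 𝔻) (hl0 : l ≠ 0)
    (ψ₀ ψ₁ : ℂ → ℂ)
    (hψ₀ : DifferentiableOn ℂ ψ₀ 𝔻) (hψ₁ : DifferentiableOn ℂ ψ₁ 𝔻)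
    (J : H2 → H2) (hJ : IsJ beta l J)
    (K K1 : ℂ → H2)
    (hK : ∀ w ∈ 𝔻, ∀ u ∈ 𝔻, H2.toFun (K w) u = 1 / (1 - conj w * u))
    (hK1 : ∀ w ∈ 𝔻, ∀ u ∈ 𝔻, H2.toFun (K1 w) u = u / (1 - conj w * u) ^ 2)
    (hid : ∀ z ∈ 𝔻, ∀ u ∈ 𝔻,
      ψ₀ u / (1 - u * conj z) + ψ₁ u * conj z / (1 - u * conj z) ^ 2 =
        conj (beta * kappa l z) *
          (ψ₀ (conj (phi l z)) * H2.toFun (J (K (conj (phi l z)))) u +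
            ψ₁ (conj (phi l z)) * H2.toFun (J (K1 (conj (phi l z)))) u)) :
    ∃ a b c d : ℂ, d = -(l * b) / conj l - l * c ∧
      ∀ u ∈ 𝔻, ψ₀ u = a + b * u ∧ ψ₁ u = d + c * u + b * u ^ 2 := by
  classical
  have hl' : ‖l‖ < 1 := by simpa [𝔻] using hl
  have ht0 : conj l ≠ 0 := by simpa using hl0
  have h0D : (0:ℂ) ∈ 𝔻 := by simp [𝔻]
  have hmem : ∀ w : ℂ, w ∈ 𝔻 ↔ ‖w‖ < 1 := by intro w; simp [𝔻]
  have hden : ∀ u ∈ 𝔻, (1 : ℂ) - u * conj l ≠ 0 := by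
    intro u hu
    have hu' : ‖u‖ < 1 := (hmem u).mp hu
    intro h
    have h1 : (1:ℂ) = u * conj l := sub_eq_zero.mp h
    have : (1:ℝ) = ‖u‖ * ‖l‖ := by
      calc (1:ℝ) = ‖(1:ℂ)‖ := by simp
        _ = ‖u * conj l‖ := by rw [h1]
        _ = ‖u‖ * ‖l‖ := by simp [norm_mul]
    nlinarith [norm_nonneg u, norm_nonneg l]
  have hnsq : ∀ u : ℂ, ‖u‖ < 1 → ‖l - u‖ < ‖1 - u * conj l‖ := by
    intro u hu
    have h1 : Complex.normSq (1 - u * conj l) - Complex.normSq (l - u)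
        = (1 - Complex.normSq u) * (1 - Complex.normSq l) := by
      simp [Complex.normSq_apply, Complex.sub_re, Complex.sub_im, Complex.mul_re,
        Complex.mul_im, Complex.one_re, Complex.one_im]
      ring
    have hu2 : Complex.normSq u = ‖u‖^2 := by
      rw [Complex.normSq_eq_norm_sq]
    have hl2 : Complex.normSq l = ‖l‖^2 := by
      rw [Complex.normSq_eq_norm_sq]
    have ha : Complex.normSq (l - u) = ‖l - u‖^2 := by
      rw [Complex.normSq_eq_norm_sq]
    have hb : Complex.normSq (1 - u * conj l) = ‖1 - u * conj l‖^2 := by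
      rw [Complex.normSq_eq_norm_sq]
    rw [ha, hb, hu2, hl2] at h1
    have hpos : 0 < (1 - ‖u‖^2) * (1 - ‖l‖^2) :=
      mul_pos (by nlinarith [norm_nonneg u]) (by nlinarith [norm_nonneg l])
    have h2 : ‖l - u‖^2 < ‖1 - u * conj l‖^2 := by linarith
    exact lt_of_pow_lt_pow_left₀ 2 (norm_nonneg _) h2
  have hphiD : ∀ u ∈ 𝔻, phi l u ∈ 𝔻 := by
    intro u hu
    have hu' : ‖u‖ < 1 := (hmem u).mp hu
    have h2 := hnsq u hu'
    have hdpos : (0:ℝ) < ‖1 - u * conj l‖ := lt_of_le_of_lt (norm_nonneg _) h2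
    rw [hmem]
    have : ‖phi l u‖ = (‖l‖ / ‖l‖) * (‖l - u‖ / ‖1 - u * conj l‖) := by
      simp [phi, norm_div, norm_mul]
    rw [this, div_self (by simpa using hl0), one_mul]
    exact (div_lt_one hdpos).mpr h2
  have hconjD : ∀ w : ℂ, w ∈ 𝔻 → conj w ∈ 𝔻 := by
    intro w hw; rw [hmem] at hw ⊢; simpa using hw
  set s : ℂ := ((Real.sqrt (1 - ‖l‖ ^ 2) : ℝ) : ℂ) with hs_def
  have hkap : ∀ v : ℂ, kappa l v = s / (1 - v * conj l) := fun v => rfl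
  have hcs : conj s = s := by rw [hs_def]; exact Complex.conj_ofReal _
  have hs2 : s * s = 1 - l * conj l := by
    have h1 : (0:ℝ) ≤ 1 - ‖l‖^2 := by nlinarith [norm_nonneg l]
    have h2 : Complex.normSq l = ‖l‖^2 := by
      rw [Complex.normSq_eq_norm_sq]
    rw [hs_def, ← Complex.ofReal_mul, Real.mul_self_sqrt h1, Complex.mul_conj, h2]
    push_cast
    ring
  have hQ0 : (1:ℂ) - l * conj l ≠ 0 := by
    rw [← hs2]
    have hpos : (0:ℝ) < Real.sqrt (1 - ‖l‖^2) :=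
      Real.sqrt_pos.mpr (by nlinarith [norm_nonneg l])
    have hs0 : s ≠ 0 := by rw [hs_def]; exact_mod_cast ne_of_gt hpos
    exact mul_ne_zero hs0 hs0
  have hββ : conj beta * beta = 1 := by
    rw [mul_comm, Complex.mul_conj]
    have : Complex.normSq beta = 1 := by
      rw [Complex.normSq_eq_norm_sq, hβ]; norm_num
    rw [this]; norm_num
  -- phi computations
  have hphi0 : conj (phi l 0) = l := by
    simp only [phi]
    rw [show (l - 0) / (1 - 0 * conj l) = l by simp]
    rw [div_mul_cancel₀ _ hl0]
    simp
  have hphil : conj (phi l l) = 0 := by simp [phi]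
  have hphiu : ∀ u ∈ 𝔻, phi l u = conj l * (l - u) / (l * (1 - u * conj l)) := by
    intro u hu
    have := hden u hu
    rw [phi]
    field_simp
  have hQu : ∀ u ∈ 𝔻, (1:ℂ) - l * phi l u = (1 - l * conj l) / (1 - u * conj l) := by
    intro u hu
    have h1 := hden u hu
    have h2 : (1:ℂ) - conj l * u ≠ 0 := by rw [mul_comm]; exact h1
    rw [hphiu u hu]
    field_simp
    ring
  -- closed forms for the J-images of kernels
  have hJKl : ∀ u ∈ 𝔻, H2.toFun (J (K l)) u = beta * s / (1 - l * conj l) := by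
    intro u hu
    have hqD : conj (phi l u) ∈ 𝔻 := hconjD _ (hphiD u hu)
    have hd1 := hden u hu
    rw [hJ (K l) u hu, hK l hl _ hqD]
    simp only [map_div₀, map_one, map_sub, map_mul, Complex.conj_conj]
    rw [hQu u hu, hkap, one_div_div]
    field_simp
  have hJK1l : ∀ u ∈ 𝔻, H2.toFun (J (K1 l)) u
      = beta * s * (conj l * (l - u)) / (l * (1 - l * conj l)^2) := by
    intro u hu
    have hqD : conj (phi l u) ∈ 𝔻 := hconjD _ (hphiD u hu)
    have hd1 := hden u hu
    rw [hJ (K1 l) u hu, hK1 l hl _ hqD]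
    simp only [map_div₀, map_one, map_sub, map_mul, map_pow, Complex.conj_conj]
    rw [hQu u hu, div_pow, div_div_eq_mul_div, hphiu u hu, hkap]
    field_simp
  have hJK0 : ∀ u ∈ 𝔻, H2.toFun (J (K 0)) u = beta * s / (1 - u * conj l) := by
    intro u hu
    have hqD : conj (phi l u) ∈ 𝔻 := hconjD _ (hphiD u hu)
    rw [hJ (K 0) u hu, hK 0 h0D _ hqD]
    simp only [map_zero, zero_mul, sub_zero, div_one, map_one]
    rw [hkap]
    ring
  have hJK10 : ∀ u ∈ 𝔻, H2.toFun (J (K1 0)) u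
      = beta * s * (conj l * (l - u)) / (l * (1 - u * conj l)^2) := by
    intro u hu
    have hqD : conj (phi l u) ∈ 𝔻 := hconjD _ (hphiD u hu)
    have hd1 := hden u hu
    rw [hJ (K1 0) u hu, hK1 0 h0D _ hqD]
    simp only [map_zero, zero_mul, sub_zero, one_pow, div_one, Complex.conj_conj]
    rw [hkap, hphiu u hu, ← mul_div_assoc, ← mul_div_assoc, div_mul_eq_mul_div, div_div]
    congr 1
    ring
  -- equation from z = 0, cleared of denominators
  have e0 : ∀ u ∈ 𝔻, ψ₀ u * (l * (1 - l * conj l))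
      = ψ₀ l * (l * (1 - l * conj l)) + ψ₁ l * (conj l * (l - u)) := by
    intro u hu
    have h := hid 0 h0D u hu
    rw [hphi0, hJKl u hu, hJK1l u hu] at h
    simp only [map_zero, mul_zero, zero_mul, zero_div, sub_zero, div_one, add_zero] at h
    rw [show kappa l 0 = s by rw [hkap]; simp] at h
    rw [map_mul, hcs] at h
    rw [h]
    calc conj beta * s *
          (ψ₀ l * (beta * s / (1 - l * conj l)) +
            ψ₁ l * (beta * s * (conj l * (l - u)) / (l * (1 - l * conj l) ^ 2))) *
          (l * (1 - l * conj l))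
        = (conj beta * beta) * ((s * s) *
            (ψ₀ l / (1 - l * conj l) +
              ψ₁ l * (conj l * (l - u)) / (l * (1 - l * conj l) ^ 2))) *
            (l * (1 - l * conj l)) := by ring
      _ = 1 * ((1 - l * conj l) *
            (ψ₀ l / (1 - l * conj l) +
              ψ₁ l * (conj l * (l - u)) / (l * (1 - l * conj l) ^ 2))) *
            (l * (1 - l * conj l)) := by rw [hββ, hs2]
      _ = ψ₀ l * (l * (1 - l * conj l)) + ψ₁ l * (conj l * (l - u)) := by
            field_simp
  -- equation from z = l, cleared of denominators
  have e1 : ∀ u ∈ 𝔻, ψ₀ u * (l * (1 - u * conj l)) + ψ₁ u * (l * conj l)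
      = ψ₀ 0 * (l * (1 - u * conj l)) + ψ₁ 0 * (conj l * (l - u)) := by
    intro u hu
    have hd1 := hden u hu
    have hA0 : (1:ℂ) - conj l * l ≠ 0 := by
      intro h'; apply hQ0; rw [← h']; ring
    have h := hid l hl u hu
    rw [hphil, hJK0 u hu, hJK10 u hu] at h
    rw [show conj (beta * kappa l l) = conj beta * (s / (1 - conj l * l)) from by
      rw [hkap, map_mul, map_div₀, hcs, map_sub, map_one, map_mul, Complex.conj_conj]] at h
    rw [show conj beta * (s / (1 - conj l * l)) *
          (ψ₀ 0 * (beta * s / (1 - u * conj l)) +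
            ψ₁ 0 * (beta * s * (conj l * (l - u)) / (l * (1 - u * conj l) ^ 2)))
        = (conj beta * beta) * ((s * s) *
            (ψ₀ 0 * (1 / (1 - conj l * l)) * (1 / (1 - u * conj l)) +
              ψ₁ 0 * (conj l * (l - u)) * (1 / (1 - conj l * l)) *
                (1 / (l * (1 - u * conj l) ^ 2)))) from by ring] at h
    rw [hββ, hs2] at h
    field_simp [hd1, hA0, hl0] at h
    have hF : ((1 - conj l * l)^2 * (1 - u * conj l)^4 : ℂ) ≠ 0 :=
      mul_ne_zero (pow_ne_zero _ hA0) (pow_ne_zero _ hd1)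
    apply mul_right_cancel₀ hF
    linear_combination ((1 - conj l * l)^2 * (1 - u * conj l)^4) * h
  -- assemble the answer
  set b : ℂ := -(conj l * ψ₁ l) / (l * (1 - l * conj l)) with hb_def
  have hb_mul : b * (l * (1 - l * conj l)) = -(conj l * ψ₁ l) := by
    rw [hb_def]; field_simp
    rw [mul_div_assoc, div_self (show (1:ℂ) - conj l * l ≠ 0 by rw [mul_comm]; exact hQ0), mul_one]
  set c : ℂ := -(b / conj l) - ψ₁ 0 / l with hc_def
  have hc_mul : c * (l * conj l) = -(b * l) - ψ₁ 0 * conj l := by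
    rw [hc_def]; field_simp
  refine ⟨ψ₀ l - l * b, b, c, ψ₁ 0, ?_, ?_⟩
  · rw [hc_def]
    field_simp
    ring
  · intro u hu
    have e0u := e0 u hu
    have e00 := e0 0 h0D
    have e1u := e1 u hu
    constructor
    · have key : ψ₀ u * (l * (1 - l * conj l))
          = (ψ₀ l - l * b + b * u) * (l * (1 - l * conj l)) := by
        linear_combination e0u + (l - u) * hb_mul
      exact mul_right_cancel₀ (mul_ne_zero hl0 hQ0) key
    · have key : ψ₁ u * (l * conj l * (1 - l * conj l))
          = (ψ₁ 0 + c * u + b * u ^ 2) * (l * conj l * (1 - l * conj l)) := by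
        linear_combination (1 - l * conj l) * e1u - (1 - u * conj l) * e0u
          + (1 - u * conj l) * e00 + u * (1 - u * conj l) * hb_mul
          - u * (1 - l * conj l) * hc_mul
      exact mul_right_cancel₀ (mul_ne_zero (mul_ne_zero hl0 ht0) hQ0) key
end
end

section
/- Let ℰ be any first-order differential operator on H² (not necessarily maximal) with holomorphic symbols ψ₀, ψ₁, meaning ℰf = ψ₀f + ψ₁f' for f ∈ dom(ℰ). If ψ₁(u) = 0 for some u ∈ 𝔻, then every eigenvalue λ of ℰ is of the form λ = ψ₀(u) + ℓ·ψ₁'(u) for some ℓ ∈ ℕ. -/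
open Complex ComplexConjugate Metric Filter Topology
open scoped ENNReal NNReal

noncomputable section

/-- if the top symbol `ψ₁` of a first-order differential operator vanishes at
some `u ∈ 𝔻`, then every eigenvalue `μ` (with eigenfunction `g ∈ H²`, `g ≠ 0`, satisfying
`ψ₀ g + ψ₁ g′ = μ g` on `𝔻`) is of the form `μ = ψ₀(u) + ℓ·ψ₁′(u)` for some `ℓ ∈ ℕ`. -/
theorem stmt19 (ψ₀ ψ₁ : ℂ → ℂ)
    (hψ₀ : DifferentiableOn ℂ ψ₀ 𝔻) (hψ₁ : DifferentiableOn ℂ ψ₁ 𝔻)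
    (u : ℂ) (hu : u ∈ 𝔻) (hu0 : ψ₁ u = 0)
    (μ : ℂ) (g : H2) (hg0 : g ≠ 0)
    (heig : ∀ z ∈ 𝔻, ψ₀ z * H2.toFun g z + ψ₁ z * deriv (H2.toFun g) z = μ * H2.toFun g z) :
    ∃ ℓ : ℕ, μ = ψ₀ u + (ℓ : ℂ) * deriv ψ₁ u := by
  have hD : IsOpen 𝔻 := isOpen_ball
  have hnhds : 𝔻 ∈ 𝓝 u := hD.mem_nhds hu
  set F := H2.toFun g with hFdef
  set c : ℕ → ℂ := fun n => g n with hc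
  set p := FormalMultilinearSeries.ofScalars ℂ c with hp
  have hrad : 1 ≤ p.radius := by
    apply FormalMultilinearSeries.le_radius_of_bound _ ‖g‖ (r := 1)
    intro n
    rw [hp, FormalMultilinearSeries.ofScalars_norm]
    simpa using lp.norm_apply_le_norm two_ne_zero g n
  have hFeq : F = p.sum := by
    funext z
    show (∑' n, c n * z ^ n) = p.sum z
    rw [show p.sum z = FormalMultilinearSeries.ofScalarsSum c z from rfl,
        FormalMultilinearSeries.ofScalars_sum_eq]
    simp [smul_eq_mul]
  have hFs : HasFPowerSeriesOnBall F p 0 1 := by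
    rw [hFeq]
    exact (p.hasFPowerSeriesOnBall (lt_of_lt_of_le one_pos hrad)).mono one_pos hrad
  have hballeq : Metric.eball (0 : ℂ) 1 = 𝔻 := by
    rw [show (1 : ℝ≥0∞) = ((1 : NNReal) : ℝ≥0∞) from rfl, Metric.eball_coe]
    rfl
  have hFa : AnalyticOnNhd ℂ F 𝔻 := by
    intro z hz
    exact hFs.analyticAt_of_mem (by rw [hballeq]; exact hz)
  -- F is not eventually zero near u
  have hnot : ¬ (∀ᶠ z in 𝓝 u, F z = 0) := by
    intro h
    have hzero : Set.EqOn F 0 𝔻 :=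
      hFa.eqOn_zero_of_preconnected_of_eventuallyEq_zero
        (convex_ball (0 : ℂ) 1).isPreconnected hu h
    have h0D : (0 : ℂ) ∈ 𝔻 := by simp [𝔻]
    have hev0 : F =ᶠ[𝓝 (0 : ℂ)] 0 :=
      Filter.eventuallyEq_of_mem (hD.mem_nhds h0D) hzero
    have hp0 : p = 0 := hFs.hasFPowerSeriesAt.eq_zero_of_eventually hev0
    have hc0 : c = 0 := by
      rwa [hp, FormalMultilinearSeries.ofScalars_series_eq_zero] at hp0
    apply hg0
    ext n
    exact congrFun hc0 n
  -- order and factorization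
  have hFu : AnalyticAt ℂ F u := hFa u hu
  have hord : analyticOrderAt F u ≠ ⊤ := by
    rw [Ne, analyticOrderAt_eq_top]; exact hnot
  obtain ⟨n, hn⟩ := ENat.ne_top_iff_exists.mp hord
  obtain ⟨h, hha, hh0, hfz⟩ := (hFu.analyticOrderAt_eq_natCast (n := n)).mp hn.symm
  -- continuity facts
  have hψ₀c : ContinuousAt ψ₀ u := (hψ₀.differentiableAt hnhds).continuousAt
  have hψ₁d : HasDerivAt ψ₁ (deriv ψ₁ u) u :=
    (hψ₁.differentiableAt hnhds).hasDerivAt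
  have hslope : Tendsto (slope ψ₁ u) (𝓝[≠] u) (𝓝 (deriv ψ₁ u)) :=
    hasDerivAt_iff_tendsto_slope.mp hψ₁d
  have hhc : ContinuousAt h u := hha.continuousAt
  have hh'a : AnalyticAt ℂ (deriv h) u := by
    have : AnalyticOnNhd ℂ h {u} := fun z hz => by rwa [Set.mem_singleton_iff.mp hz]
    exact this.deriv u rfl
  have hh'c : ContinuousAt (deriv h) u := hh'a.continuousAt
  -- eventual differentiability of h
  have hdiff : ∀ᶠ z in 𝓝 u, DifferentiableAt ℂ h z := by
    filter_upwards [hha.eventually_analyticAt] with z hz using hz.differentiableAt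
  -- eventual formula for deriv F
  have hderF : ∀ᶠ z in 𝓝 u,
      deriv F z = (n : ℂ) * (z - u) ^ (n - 1) * h z + (z - u) ^ n * deriv h z := by
    have hFq : F =ᶠ[𝓝 u] fun z => (z - u) ^ n * h z := by
      filter_upwards [hfz] with z hz using by simpa [smul_eq_mul] using hz
    filter_upwards [hFq.deriv, hdiff] with z hz hdz
    rw [hz]
    have hpow : HasDerivAt (fun w : ℂ => (w - u) ^ n) ((n : ℂ) * (z - u) ^ (n - 1)) z := by
      simpa using ((hasDerivAt_id z).sub_const u).fun_pow n
    exact (hpow.mul hdz.hasDerivAt).deriv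
  -- the auxiliary function E vanishes eventually on the punctured neighborhood
  set E : ℂ → ℂ := fun z => (ψ₀ z - μ) * h z +
      slope ψ₁ u z * ((n : ℂ) * h z + (z - u) * deriv h z) with hE
  have hev : ∀ᶠ z in 𝓝[≠] u, E z = 0 := by
    have h1 : ∀ᶠ z in 𝓝[≠] u, z ∈ 𝔻 := eventually_nhdsWithin_of_eventually_nhds
      (eventually_of_mem hnhds fun z hz => hz)
    have h2 : ∀ᶠ z in 𝓝[≠] u, F z = (z - u) ^ n * h z :=
      eventually_nhdsWithin_of_eventually_nhds
        (by filter_upwards [hfz] with z hz using by simpa [smul_eq_mul] using hz)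
    have h3 : ∀ᶠ z in 𝓝[≠] u,
        deriv F z = (n : ℂ) * (z - u) ^ (n - 1) * h z + (z - u) ^ n * deriv h z :=
      eventually_nhdsWithin_of_eventually_nhds hderF
    filter_upwards [h1, h2, h3, self_mem_nhdsWithin] with z hzD hzF hzF' hzne
    have hzu : z - u ≠ 0 := sub_ne_zero.mpr hzne
    have hs : ψ₁ z = (z - u) * slope ψ₁ u z := by
      rw [slope_def_field, hu0, sub_zero]
      field_simp
    have hFd2 : (z - u) * deriv F z
        = (n : ℂ) * (z - u) ^ n * h z + (z - u) ^ n * ((z - u) * deriv h z) := by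
      rw [hzF']
      cases n with
      | zero => simp
      | succ m => simp only [Nat.add_sub_cancel]; push_cast; ring
    have e1 : ψ₀ z * F z + ψ₁ z * deriv F z - μ * F z = 0 := by
      rw [heig z hzD]; ring
    have key : (z - u) ^ (n + 1) * E z = 0 := by
      calc (z - u) ^ (n + 1) * E z
          = (z - u) * ((ψ₀ z - μ) * ((z - u) ^ n * h z) +
              slope ψ₁ u z * ((n : ℂ) * (z - u) ^ n * h z +
                (z - u) ^ n * ((z - u) * deriv h z))) := by rw [hE]; ring
        _ = (z - u) * ((ψ₀ z - μ) * F z + slope ψ₁ u z * ((z - u) * deriv F z)) := by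
              rw [hzF, hFd2]
        _ = (z - u) * (ψ₀ z * F z + ψ₁ z * deriv F z - μ * F z) := by rw [hs]; ring
        _ = 0 := by rw [e1, mul_zero]
    have := mul_eq_zero.mp key
    rcases this with h' | h'
    · exact absurd h' (pow_ne_zero _ hzu)
    · exact h'
  -- limit of E
  have hEt : Tendsto E (𝓝[≠] u)
      (𝓝 ((ψ₀ u - μ) * h u + deriv ψ₁ u * ((n : ℂ) * h u + (u - u) * deriv h u))) := by
    apply Tendsto.add
    · exact ((hψ₀c.sub continuousAt_const).mul hhc).mono_left nhdsWithin_le_nhds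
    · apply hslope.mul
      apply Tendsto.mono_left _ nhdsWithin_le_nhds
      exact (continuousAt_const.mul hhc).add
        (((continuousAt_id.sub continuousAt_const).mul hh'c))
  have hL : (ψ₀ u - μ) * h u + deriv ψ₁ u * ((n : ℂ) * h u + (u - u) * deriv h u) = 0 := by
    have h0 : Tendsto E (𝓝[≠] u) (𝓝 0) := by
      rw [tendsto_congr' hev]
      exact tendsto_const_nhds
    exact tendsto_nhds_unique hEt h0
  refine ⟨n, ?_⟩
  have hfac : (ψ₀ u - μ + (n : ℂ) * deriv ψ₁ u) * h u = 0 := by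
    rw [sub_self, zero_mul, add_zero] at hL
    linear_combination hL
  rcases mul_eq_zero.mp hfac with h' | h'
  · linear_combination -h'
  · exact absurd h' hh0
end
end
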